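/- arXiv:2505.14041 — 4 statements merged into one kernel-verified Lean document; each statement's English description precedes it below -/
import Mathlib

section
/- Let K ⊆ ℝ^d be a closed set. The following are equivalent: (1) for every real multi-sequence (c_α)_{α∈ℕ^d} there exists a signed Radon measure μ on ℝ^d with all polynomial moments finite (i.e. ∫(1+|x|)^n d|μ|(x) < ∞ for every n ∈ ℕ) and with supp μ ⊆ K such that ∫ x^α dμ(x) = c_α for all α ∈ ℕ^d; (2) K is Zariski dense (every real polynomial in d variables vanishing identically on K is the zero polynomial) and for every n ∈ ℕ the real vector space N_n(K) = { P ∈ ℝ[x_1,…,x_d] : sup_{x∈K} |P(x)|/(1+|x|)^n < ∞ } is finite-dimensional. -/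
open MeasureTheory

noncomputable section

/-- First-order partial derivative in the `i`-th coordinate direction. -/
noncomputable def pderivI {d : ℕ} (i : Fin d) (f : EuclideanSpace ℝ (Fin d) → ℝ) :
    EuclideanSpace ℝ (Fin d) → ℝ :=
  fun x => fderiv ℝ f x (EuclideanSpace.single i 1)

noncomputable def pderivList {d : ℕ} : List (Fin d) → (EuclideanSpace ℝ (Fin d) → ℝ) →
    EuclideanSpace ℝ (Fin d) → ℝ
  | [], f => f
  | i :: l, f => pderivList l (pderivI i f)

/-- The multi-index partial derivative `f^{(α)}`. -/
noncomputable def pderivMulti {d : ℕ} (α : Fin d → ℕ) (f : EuclideanSpace ℝ (Fin d) → ℝ) :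
    EuclideanSpace ℝ (Fin d) → ℝ :=
  pderivList ((List.finRange d).flatMap fun i => List.replicate (α i) i) f

/-- `d_K(x) = min(1, d(x, ∂K))`. -/
noncomputable def dK {d : ℕ} (K : Set (EuclideanSpace ℝ (Fin d)))
    (x : EuclideanSpace ℝ (Fin d)) : ℝ :=
  min 1 (Metric.infDist x (frontier K))

/-- `f` is a Schwartz function: smooth, and all derivatives decay faster than any
polynomial. -/
def IsSchwartz {d : ℕ} (f : EuclideanSpace ℝ (Fin d) → ℝ) : Prop :=
  ContDiff ℝ (⊤ : ℕ∞) f ∧ ∀ (α : Fin d → ℕ) (n : ℕ), ∃ C : ℝ, ∀ x,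
    |pderivMulti α f x| * (1 + ‖x‖) ^ n ≤ C

/-- The space of polynomials `P` such that `sup_{x ∈ K} |P(x)| w(x) / (1+|x|)^n < ∞`,
as a submodule of the polynomial ring. -/
noncomputable def polyGrowthSpace (d : ℕ) (K : Set (EuclideanSpace ℝ (Fin d)))
    (w : EuclideanSpace ℝ (Fin d) → ℝ) (n : ℕ) : Submodule ℝ (MvPolynomial (Fin d) ℝ) where
  carrier := {P | ∃ C : ℝ, ∀ x ∈ K,
    |MvPolynomial.eval (fun i => x i) P * w x| ≤ C * (1 + ‖x‖) ^ n}
  zero_mem' := ⟨0, fun x _ => by simp⟩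
  add_mem' := by
    rintro P Q ⟨C, hC⟩ ⟨D, hD⟩
    refine ⟨C + D, fun x hx => ?_⟩
    have h3 : MvPolynomial.eval (fun i => x i) (P + Q) * w x
        = MvPolynomial.eval (fun i => x i) P * w x
          + MvPolynomial.eval (fun i => x i) Q * w x := by
      rw [map_add, add_mul]
    rw [h3, add_mul]
    exact (abs_add_le _ _).trans (add_le_add (hC x hx) (hD x hx))
  smul_mem' := by
    rintro c P ⟨C, hC⟩
    refine ⟨|c| * C, fun x hx => ?_⟩
    have h3 : MvPolynomial.eval (fun i => x i) (c • P) * w x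
        = c * (MvPolynomial.eval (fun i => x i) P * w x) := by
      rw [MvPolynomial.smul_eq_C_mul, map_mul, MvPolynomial.eval_C, mul_assoc]
    rw [h3, abs_mul, mul_assoc]
    exact mul_le_mul_of_nonneg_left (hC x hx) (abs_nonneg c)

/-- Integral of `f` against the signed measure `μ`. -/
noncomputable def sintegral {d : ℕ} (μ : MeasureTheory.SignedMeasure (EuclideanSpace ℝ (Fin d)))
    (f : EuclideanSpace ℝ (Fin d) → ℝ) : ℝ :=
  (∫ x, f x ∂μ.toJordanDecomposition.posPart) - (∫ x, f x ∂μ.toJordanDecomposition.negPart)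

/-- A weight sequence: positive, normalized, log-convex, non-quasianalytic. -/
def IsWeightSeq (M : ℕ → ℝ) : Prop :=
  (∀ p, 0 < M p) ∧ M 0 = 1 ∧ 1 ≤ M 1 ∧
    (∀ p : ℕ, M (p + 1) ^ 2 ≤ M p * M (p + 2)) ∧
    Summable (fun p : ℕ => M p / M (p + 1))

/-- Condition (M.2), moderate growth. -/
def CondM2 (M : ℕ → ℝ) : Prop :=
  ∃ C : ℝ, 0 < C ∧ ∀ p q : ℕ, M (p + q) ≤ C ^ (p + q) * M p * M q

/-- Condition (M.3), strong non-quasianalyticity. -/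
def CondM3 (M : ℕ → ℝ) : Prop :=
  ∃ C : ℝ, 0 < C ∧ ∀ p : ℕ, 1 ≤ p →
    (∑' q : ℕ, M (p + q) / M (p + q + 1)) ≤ C * p * (M p / M (p + 1))

/-- The function `ν_M(t) = inf_{p} t^p M_p / p!`. -/
noncomputable def nuM (M : ℕ → ℝ) (t : ℝ) : ℝ :=
  ⨅ p : ℕ, t ^ p * M p / (Nat.factorial p : ℝ)

/-- Membership in the Gelfand-Shilov space `S^{M,h}(ℝ^d)`. -/
def MemGS (d : ℕ) (M : ℕ → ℝ) (h : ℝ) (f : EuclideanSpace ℝ (Fin d) → ℝ) : Prop :=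
  ContDiff ℝ (⊤ : ℕ∞) f ∧ ∀ n : ℕ, ∃ C : ℝ,
    ∀ (α : Fin d → ℕ) (x : EuclideanSpace ℝ (Fin d)),
      |pderivMulti α f x| * (1 + ‖x‖) ^ n ≤ C * h ^ (∑ i, α i) * M (∑ i, α i)

/-- Membership in the Gelfand-Shilov space `S^σ(ℝ^d)`. -/
def MemGSsigma (d : ℕ) (σ : ℝ) (f : EuclideanSpace ℝ (Fin d) → ℝ) : Prop :=
  ContDiff ℝ (⊤ : ℕ∞) f ∧ ∃ h : ℝ, 0 < h ∧ ∀ n : ℕ, ∃ C : ℝ,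
    ∀ (α : Fin d → ℕ) (x : EuclideanSpace ℝ (Fin d)),
      |pderivMulti α f x| * (1 + ‖x‖) ^ n
        ≤ C * h ^ (∑ i, α i) * (Nat.factorial (∑ i, α i) : ℝ) ^ σ

/-- The norm `‖f‖^{M,h}_n`. -/
noncomputable def gsNorm (d : ℕ) (M : ℕ → ℝ) (h : ℝ) (n : ℕ)
    (f : EuclideanSpace ℝ (Fin d) → ℝ) : ℝ :=
  ⨆ q : (Fin d → ℕ) × EuclideanSpace ℝ (Fin d),
    |pderivMulti q.1 f q.2| * (1 + ‖q.2‖) ^ n / (h ^ (∑ i, q.1 i) * M (∑ i, q.1 i))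

/-- The norm `‖f‖_{k,n} = max_{|α| ≤ k} sup_x |f^{(α)}(x)| (1+|x|)^n`. -/
noncomputable def schwartzNormKN (d k n : ℕ) (f : EuclideanSpace ℝ (Fin d) → ℝ) : ℝ :=
  ⨆ q : {α : Fin d → ℕ // ∑ i, α i ≤ k} × EuclideanSpace ℝ (Fin d),
    |pderivMulti q.1.1 f q.2| * (1 + ‖q.2‖) ^ n

/-- The weight `e^{-ε (1/t)^{1/(σ-1)}}`, with value `0` at `t = 0`. -/
noncomputable def gevreyWeight (σ ε t : ℝ) : ℝ :=
  if t = 0 then 0 else Real.exp (-(ε * (1 / t) ^ (1 / (σ - 1))))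


namespace UnrestrictedMP
open MeasureTheory

lemma abs_coord_le_norm {d : ℕ} (x : EuclideanSpace ℝ (Fin d)) (i : Fin d) : |x i| ≤ ‖x‖ := by
  rw [EuclideanSpace.norm_eq, ← Real.sqrt_sq_eq_abs]
  apply Real.sqrt_le_sqrt
  have := Finset.single_le_sum (f := fun j => ‖x j‖ ^ 2) (fun j _ => by positivity)
    (Finset.mem_univ i)
  simpa [Real.norm_eq_abs, sq_abs] using this

lemma abs_mono_le {d : ℕ} (x : EuclideanSpace ℝ (Fin d)) (α : Fin d → ℕ) :
    |∏ i, x i ^ α i| ≤ (1 + ‖x‖) ^ (∑ i, α i) := by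
  rw [Finset.abs_prod]
  calc ∏ i, |x i ^ α i| ≤ ∏ i, (1 + ‖x‖) ^ α i := by
        apply Finset.prod_le_prod (fun i _ => abs_nonneg _)
        intro i _
        rw [abs_pow]
        exact pow_le_pow_left₀ (abs_nonneg _)
          ((abs_coord_le_norm x i).trans (by linarith [norm_nonneg x])) _
    _ = (1 + ‖x‖) ^ (∑ i, α i) := by rw [Finset.prod_pow_eq_pow_sum]

variable {d : ℕ} {K : Set (EuclideanSpace ℝ (Fin d))}
variable (μ : MeasureTheory.SignedMeasure (EuclideanSpace ℝ (Fin d)))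

lemma pos_le_tv : μ.toJordanDecomposition.posPart ≤ μ.totalVariation :=
  Measure.le_add_right le_rfl

lemma neg_le_tv : μ.toJordanDecomposition.negPart ≤ μ.totalVariation :=
  Measure.le_add_left le_rfl

variable (hint : ∀ n : ℕ, MeasureTheory.Integrable (fun x => (1 + ‖x‖) ^ n) μ.totalVariation)
include hint

lemma int_mono_tv (α : Fin d → ℕ) :
    Integrable (fun x => ∏ i, x i ^ α i) μ.totalVariation := by
  refine (hint (∑ i, α i)).mono ?_ (Filter.Eventually.of_forall fun x => ?_)
  · exact (Continuous.aestronglyMeasurable (by fun_prop))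
  · simp only [Real.norm_eq_abs]
    rw [abs_of_nonneg (show (0:ℝ) ≤ (1 + ‖x‖) ^ (∑ i, α i) by positivity)]
    exact abs_mono_le x α

/-- `sintegral` of a polynomial equals the sum of coefficients times moments. -/
lemma sintegral_poly (c : (Fin d → ℕ) → ℝ)
    (hmom : ∀ α : Fin d → ℕ, sintegral μ (fun x => ∏ i, x i ^ α i) = c α)
    (P : MvPolynomial (Fin d) ℝ) :
    sintegral μ (fun x => MvPolynomial.eval (fun i => x i) P)
      = ∑ β ∈ P.support, MvPolynomial.coeff β P * c ⇑β := by
  have hpos := pos_le_tv μ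
  have hneg := neg_le_tv μ
  have key : ∀ ν : Measure (EuclideanSpace ℝ (Fin d)), ν ≤ μ.totalVariation →
      (∫ x, MvPolynomial.eval (fun i => x i) P ∂ν)
        = ∑ β ∈ P.support, MvPolynomial.coeff β P * ∫ x, ∏ i, x i ^ β i ∂ν := by
    intro ν hν
    have h1 : ∀ β : Fin d →₀ ℕ, Integrable (fun x => ∏ i, x i ^ (β i : ℕ)) ν :=
      fun β => (int_mono_tv μ hint ⇑β).mono_measure hν
    have : (fun x : EuclideanSpace ℝ (Fin d) => MvPolynomial.eval (fun i => x i) P)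
        = fun x => ∑ β ∈ P.support, MvPolynomial.coeff β P * ∏ i, x i ^ β i := by
      funext x; rw [MvPolynomial.eval_eq']
    rw [this, integral_finset_sum _ fun β _ => (h1 β).const_mul _]
    refine Finset.sum_congr rfl fun β _ => ?_
    simpa [smul_eq_mul] using
      integral_smul (MvPolynomial.coeff β P) (fun x => ∏ i, x i ^ β i) (μ := ν)
  unfold sintegral
  rw [key _ hpos, key _ hneg, ← Finset.sum_sub_distrib]
  refine Finset.sum_congr rfl fun β _ => ?_
  rw [← mul_sub]
  congr 1
  exact hmom ⇑β

omit hint in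
lemma sintegral_zero_on_K (hsupp : μ.totalVariation Kᶜ = 0)
    (f : EuclideanSpace ℝ (Fin d) → ℝ) (hf : ∀ x ∈ K, f x = 0) :
    sintegral μ f = 0 := by
  have hnull : ∀ ν : Measure (EuclideanSpace ℝ (Fin d)), ν ≤ μ.totalVariation →
      (∫ x, f x ∂ν) = 0 := by
    intro ν hν
    refine integral_eq_zero_of_ae ?_
    have hsub : {x | ¬ f x = 0} ⊆ Kᶜ := fun x hx hxK => hx (hf x hxK)
    have h0 : ν {x | ¬ f x = 0} = 0 :=
      le_antisymm (((measure_mono hsub).trans ((hν _).trans_eq hsupp))) zero_le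
    exact (MeasureTheory.ae_iff (p := fun x => f x = 0)).2 h0
  unfold sintegral
  rw [hnull _ (pos_le_tv μ), hnull _ (neg_le_tv μ), sub_zero]

/-- Bound on the integral of a polynomial with controlled growth on `K`. -/
lemma sintegral_bound (hsupp : μ.totalVariation Kᶜ = 0) (n : ℕ)
    (P : MvPolynomial (Fin d) ℝ) (C : ℝ) (hC : 0 ≤ C)
    (hb : ∀ x ∈ K, |MvPolynomial.eval (fun i => x i) P| ≤ C * (1 + ‖x‖) ^ n) :
    |sintegral μ (fun x => MvPolynomial.eval (fun i => x i) P)|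
      ≤ C * ∫ x, (1 + ‖x‖) ^ n ∂μ.totalVariation := by
  set f : EuclideanSpace ℝ (Fin d) → ℝ := fun x => MvPolynomial.eval (fun i => x i) P with hf
  have hfint : Integrable f μ.totalVariation := by
    have : (fun x : EuclideanSpace ℝ (Fin d) => MvPolynomial.eval (fun i => x i) P)
        = fun x => ∑ β ∈ P.support, MvPolynomial.coeff β P * ∏ i, x i ^ β i := by
      funext x; rw [MvPolynomial.eval_eq']
    rw [hf, this]
    exact integrable_finset_sum _ fun β _ => (int_mono_tv μ hint ⇑β).const_mul _
  have key : ∀ ν : Measure (EuclideanSpace ℝ (Fin d)), ν ≤ μ.totalVariation →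
      (∫ x, |f x| ∂ν) ≤ C * ∫ x, (1 + ‖x‖) ^ n ∂ν := by
    intro ν hν
    have h1 : Integrable (fun x => |f x|) ν := (hfint.mono_measure hν).abs
    have h2 : Integrable (fun x => C * (1 + ‖x‖) ^ n) ν :=
      ((hint n).mono_measure hν).const_mul C
    have hae : ∀ᵐ x ∂ν, |f x| ≤ C * (1 + ‖x‖) ^ n := by
      have h0 : ν {x | ¬ |f x| ≤ C * (1 + ‖x‖) ^ n} = 0 := by
        have hsub : {x | ¬ |f x| ≤ C * (1 + ‖x‖) ^ n} ⊆ Kᶜ := by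
          intro x hx hxK
          exact hx (hb x hxK)
        exact le_antisymm (((measure_mono hsub).trans ((hν _).trans_eq hsupp)))
          zero_le
      exact (MeasureTheory.ae_iff (p := fun x => |f x| ≤ C * (1 + ‖x‖) ^ n)).2 h0
    calc (∫ x, |f x| ∂ν) ≤ ∫ x, C * (1 + ‖x‖) ^ n ∂ν := integral_mono_ae h1 h2 hae
      _ = C * ∫ x, (1 + ‖x‖) ^ n ∂ν := by
          simpa [smul_eq_mul] using integral_smul C (fun x : EuclideanSpace ℝ (Fin d)
            => (1 + ‖x‖) ^ n) (μ := ν)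
  have habs : ∀ ν : Measure (EuclideanSpace ℝ (Fin d)),
      |∫ x, f x ∂ν| ≤ ∫ x, |f x| ∂ν := by
    intro ν
    simpa [Real.norm_eq_abs] using
      norm_integral_le_integral_norm (μ := ν) f
  have h3 : |sintegral μ f|
      ≤ (∫ x, |f x| ∂μ.toJordanDecomposition.posPart)
        + ∫ x, |f x| ∂μ.toJordanDecomposition.negPart := by
    unfold sintegral
    exact (abs_sub _ _).trans (add_le_add (habs _) (habs _))
  have h4 : (∫ x, |f x| ∂μ.toJordanDecomposition.posPart)
        + (∫ x, |f x| ∂μ.toJordanDecomposition.negPart)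
      ≤ C * (∫ x, (1 + ‖x‖) ^ n ∂μ.toJordanDecomposition.posPart)
        + C * ∫ x, (1 + ‖x‖) ^ n ∂μ.toJordanDecomposition.negPart :=
    add_le_add (key _ (pos_le_tv μ)) (key _ (neg_le_tv μ))
  have h5 : (∫ x, (1 + ‖x‖) ^ n ∂μ.totalVariation)
      = (∫ x, (1 + ‖x‖) ^ n ∂μ.toJordanDecomposition.posPart)
        + ∫ x, (1 + ‖x‖) ^ n ∂μ.toJordanDecomposition.negPart := by
    have := integral_add_measure (μ := μ.toJordanDecomposition.posPart)
      (ν := μ.toJordanDecomposition.negPart)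
      (f := fun x : EuclideanSpace ℝ (Fin d) => (1 + ‖x‖) ^ n)
      ((hint n).mono_measure (pos_le_tv μ)) ((hint n).mono_measure (neg_le_tv μ))
    exact this
  calc |sintegral μ f| ≤ _ := h3.trans h4
    _ = C * ∫ x, (1 + ‖x‖) ^ n ∂μ.totalVariation := by rw [h5, mul_add]

end UnrestrictedMP

namespace UMP
variable {d : ℕ}
abbrev Pt (d : ℕ) := EuclideanSpace ℝ (Fin d)
abbrev FM (d : ℕ) := List (Pt d × ℝ)
def inK (K : Set (Pt d)) (ρ : FM d) : Prop := ∀ q ∈ ρ, q.1 ∈ K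
noncomputable def momF (ρ : FM d) (f : Pt d → ℝ) : ℝ :=
  (ρ.map (fun q => q.2 * f q.1)).sum
noncomputable def mass (ν : ℕ) (ρ : FM d) : ℝ :=
  (ρ.map (fun q => |q.2| * (1 + ‖q.1‖) ^ ν)).sum
noncomputable def scaleFM (c : ℝ) (ρ : FM d) : FM d := ρ.map (fun q => (q.1, c * q.2))
lemma momF_append (ρ₁ ρ₂ : FM d) (f : Pt d → ℝ) :
    momF (ρ₁ ++ ρ₂) f = momF ρ₁ f + momF ρ₂ f := by simp [momF]
lemma mass_append (ν : ℕ) (ρ₁ ρ₂ : FM d) :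
    mass ν (ρ₁ ++ ρ₂) = mass ν ρ₁ + mass ν ρ₂ := by simp [mass]
lemma momF_scale (c : ℝ) (ρ : FM d) (f : Pt d → ℝ) :
    momF (scaleFM c ρ) f = c * momF ρ f := by
  simp only [momF, scaleFM, List.map_map]
  induction ρ with
  | nil => simp
  | cons q l ih => simp at ih ⊢; rw [ih]; ring
lemma mass_scale (c : ℝ) (ν : ℕ) (ρ : FM d) :
    mass ν (scaleFM c ρ) = |c| * mass ν ρ := by
  simp only [mass, scaleFM, List.map_map]
  induction ρ with
  | nil => simp
  | cons q l ih => simp at ih ⊢; rw [ih]; ring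
lemma inK_scale {K : Set (Pt d)} {ρ : FM d} (h : inK K ρ) (c : ℝ) : inK K (scaleFM c ρ) := by
  intro q hq
  simp only [scaleFM, List.mem_map] at hq
  obtain ⟨q', hq', rfl⟩ := hq
  exact h q' hq'
lemma inK_append {K : Set (Pt d)} {ρ₁ ρ₂ : FM d} (h₁ : inK K ρ₁) (h₂ : inK K ρ₂) :
    inK K (ρ₁ ++ ρ₂) := by
  intro q hq
  rcases List.mem_append.1 hq with h | h
  · exact h₁ q h
  · exact h₂ q h
lemma abs_coord_le_norm' {n : ℕ} (x : EuclideanSpace ℝ (Fin n)) (i : Fin n) : |x i| ≤ ‖x‖ := by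
  rw [EuclideanSpace.norm_eq, ← Real.sqrt_sq_eq_abs]
  apply Real.sqrt_le_sqrt
  have := Finset.single_le_sum (f := fun j => ‖x j‖ ^ 2) (fun j _ => by positivity)
    (Finset.mem_univ i)
  simpa [Real.norm_eq_abs, sq_abs] using this

-- ### S2: polynomial pairing and the filtration
noncomputable def momP (ρ : FM d) (P : MvPolynomial (Fin d) ℝ) : ℝ :=
  momF ρ (fun x => MvPolynomial.eval (fun i => x i) P)

lemma momP_eq_sum (ρ : FM d) (P : MvPolynomial (Fin d) ℝ) :
    momP ρ P = (ρ.map (fun q => q.2 * MvPolynomial.eval (fun i => q.1 i) P)).sum := rfl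

/-- `momP ρ` as a linear map in the polynomial. -/
noncomputable def momPL (ρ : FM d) : MvPolynomial (Fin d) ℝ →ₗ[ℝ] ℝ where
  toFun := momP ρ
  map_add' := by
    intro P Q
    simp only [momP, momF, map_add]
    induction ρ with
    | nil => simp
    | cons q l ih => simp at ih ⊢; rw [ih]; ring
  map_smul' := by
    intro c P
    simp only [momP, momF, _root_.map_smul, smul_eq_mul, RingHom.id_apply]
    induction ρ with
    | nil => simp
    | cons q l ih => simp at ih ⊢; rw [ih]; ring

@[simp] lemma momPL_apply (ρ : FM d) (P : MvPolynomial (Fin d) ℝ) : momPL ρ P = momP ρ P := rfl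

variable {K : Set (Pt d)}

/-- the filtration space -/
noncomputable abbrev NS (K : Set (Pt d)) (n : ℕ) : Submodule ℝ (MvPolynomial (Fin d) ℝ) :=
  polyGrowthSpace d K (fun _ => 1) n

lemma NS_mono {m n : ℕ} (h : m ≤ n) : NS K m ≤ NS K n := by
  rintro P ⟨C, hC⟩
  refine ⟨max C 0, fun x hx => ?_⟩
  calc |MvPolynomial.eval (fun i => x i) P * 1| ≤ C * (1 + ‖x‖) ^ m := hC x hx
    _ ≤ max C 0 * (1 + ‖x‖) ^ m :=
        mul_le_mul_of_nonneg_right (le_max_left _ _) (by positivity)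
    _ ≤ max C 0 * (1 + ‖x‖) ^ n :=
        mul_le_mul_of_nonneg_left
          (pow_le_pow_right₀ (by linarith [norm_nonneg x]) h) (le_max_right _ _)

lemma abs_mono_le' {n : ℕ} (x : EuclideanSpace ℝ (Fin n)) (α : Fin n → ℕ) :
    |∏ i, x i ^ α i| ≤ (1 + ‖x‖) ^ (∑ i, α i) := by
  rw [Finset.abs_prod]
  calc ∏ i, |x i ^ α i| ≤ ∏ i, (1 + ‖x‖) ^ α i := by
        apply Finset.prod_le_prod (fun i _ => abs_nonneg _)
        intro i _
        rw [abs_pow]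
        exact pow_le_pow_left₀ (abs_nonneg _)
          ((abs_coord_le_norm' x i).trans (by linarith [norm_nonneg x])) _
    _ = (1 + ‖x‖) ^ (∑ i, α i) := by rw [Finset.prod_pow_eq_pow_sum]

lemma eval_prod_pow (x : Pt d) (α : Fin d → ℕ) :
    MvPolynomial.eval (fun i => x i) (∏ i, MvPolynomial.X i ^ α i : MvPolynomial (Fin d) ℝ)
      = ∏ i, x i ^ α i := by
  simp

lemma prod_pow_mem_NS (α : Fin d → ℕ) {n : ℕ} (h : (∑ i, α i) ≤ n) :
    (∏ i, MvPolynomial.X i ^ α i : MvPolynomial (Fin d) ℝ) ∈ NS K n := by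
  refine ⟨1, fun x hx => ?_⟩
  rw [eval_prod_pow, mul_one, one_mul]
  exact (abs_mono_le' x α).trans
    (pow_le_pow_right₀ (by linarith [norm_nonneg x]) h)

lemma poly_eq_sum_smul_prod (P : MvPolynomial (Fin d) ℝ) :
    P = ∑ β ∈ P.support, MvPolynomial.coeff β P • ∏ i, MvPolynomial.X i ^ β i := by
  conv_lhs => rw [← MvPolynomial.support_sum_monomial_coeff P]
  refine Finset.sum_congr rfl fun β _ => ?_
  rw [show (∏ i, MvPolynomial.X i ^ (β i : ℕ) : MvPolynomial (Fin d) ℝ)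
      = MvPolynomial.monomial β 1 by
    rw [MvPolynomial.monomial_eq, map_one, one_mul, Finsupp.prod_pow]]
  rw [MvPolynomial.smul_monomial, smul_eq_mul, mul_one]

lemma mem_NS_of_degrees (P : MvPolynomial (Fin d) ℝ) {n : ℕ}
    (h : ∀ β ∈ P.support, (∑ i, β i) ≤ n) : P ∈ NS K n := by
  rw [poly_eq_sum_smul_prod P]
  exact Submodule.sum_mem _ fun β hβ =>
    Submodule.smul_mem _ _ (prod_pow_mem_NS _ (h β hβ))

end UMP


namespace UMP
variable {d : ℕ} {K : Set (Pt d)}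


lemma sum_map_toList {α : Type*} (s : Finset α) (f : α → ℝ) :
    (s.toList.map f).sum = ∑ v ∈ s, f v := by
  have h1 : ((s.toList.map f : List ℝ) : Multiset ℝ).sum = (s.toList.map f).sum :=
    Multiset.sum_coe _
  rw [← h1]
  have h2 : ((s.toList.map f : List ℝ) : Multiset ℝ) = Multiset.map f s.val := by
    rw [← Multiset.map_coe, Finset.coe_toList]
  rw [h2]
  rfl

lemma mass_mono_exp {m ν : ℕ} (h : m ≤ ν) (ρ : FM d) : mass m ρ ≤ mass ν ρ := by
  induction ρ with
  | nil => simp [mass]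
  | cons q l ih =>
    have h1 : mass m (q :: l) = |q.2| * (1 + ‖q.1‖) ^ m + mass m l := by simp [mass]
    have h2 : mass ν (q :: l) = |q.2| * (1 + ‖q.1‖) ^ ν + mass ν l := by simp [mass]
    rw [h1, h2]
    refine add_le_add ?_ ih
    refine mul_le_mul_of_nonneg_left ?_ (abs_nonneg _)
    exact pow_le_pow_right₀ (by linarith [norm_nonneg q.1]) h

lemma mass_nonneg (ν : ℕ) (ρ : FM d) : 0 ≤ mass ν ρ := by
  apply List.sum_nonneg
  intro a ha
  simp only [List.mem_map] at ha
  obtain ⟨q, _, rfl⟩ := ha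
  positivity

lemma momF_flatMap {ι : Type*} (l : List ι) (g : ι → FM d) (f : Pt d → ℝ) :
    momF (l.flatMap g) f = (l.map (fun i => momF (g i) f)).sum := by
  induction l with
  | nil => simp [momF]
  | cons a t ih => simp only [List.flatMap_cons, momF_append, List.map_cons, List.sum_cons, ih]

lemma mass_flatMap {ι : Type*} (ν : ℕ) (l : List ι) (g : ι → FM d) :
    mass ν (l.flatMap g) = (l.map (fun i => mass ν (g i))).sum := by
  induction l with
  | nil => simp [mass]
  | cons a t ih => simp only [List.flatMap_cons, mass_append, List.map_cons, List.sum_cons, ih]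

lemma inK_flatMap {ι : Type*} {l : List ι} {g : ι → FM d}
    (h : ∀ i ∈ l, inK K (g i)) : inK K (l.flatMap g) := by
  intro q hq
  rw [List.mem_flatMap] at hq
  obtain ⟨i, hi, hqi⟩ := hq
  exact h i hi q hqi

variable (hzar : ∀ P : MvPolynomial (Fin d) ℝ,
    (∀ x ∈ K, MvPolynomial.eval (fun i => x i) P = 0) → P = 0)
include hzar

lemma eval_span_top (J : ℕ) (P : Fin J → MvPolynomial (Fin d) ℝ)
    (hP : LinearIndependent ℝ P) :
    Submodule.span ℝ {v : EuclideanSpace ℝ (Fin J) |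
      ∃ x ∈ K, v = fun i => MvPolynomial.eval (fun j => x j) (P i)} = ⊤ := by
  set S : Set (EuclideanSpace ℝ (Fin J)) := {v | ∃ x ∈ K, v = fun i =>
    MvPolynomial.eval (fun j => x j) (P i)} with hS
  by_contra hne
  have hbot : (Submodule.span ℝ S)ᗮ ≠ ⊥ := by
    rw [ne_eq, Submodule.orthogonal_eq_bot_iff]
    exact hne
  obtain ⟨lam, hmem, hlam0⟩ := Submodule.exists_mem_ne_zero_of_ne_bot hbot
  set Q : MvPolynomial (Fin d) ℝ := ∑ i, lam i • P i with hQ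
  have hQ0 : ∀ x ∈ K, MvPolynomial.eval (fun j => x j) Q = 0 := by
    intro x hx
    set vx : EuclideanSpace ℝ (Fin J) := WithLp.toLp 2 (fun i => MvPolynomial.eval (fun j => x j) (P i))
      with hvx
    have hvS : vx ∈ S := ⟨x, hx, rfl⟩
    have hinner := (Submodule.mem_orthogonal _ _).1 hmem _ (Submodule.subset_span hvS)
    have hin2 : (inner ℝ vx lam : ℝ) = ∑ i, vx i * lam i := by
      rw [PiLp.inner_apply]
      simp [RCLike.inner_apply, mul_comm]
    rw [hin2] at hinner
    rw [hQ, map_sum]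
    rw [← hinner]
    refine Finset.sum_congr rfl fun i _ => ?_
    rw [MvPolynomial.smul_eq_C_mul, map_mul, MvPolynomial.eval_C]
    ring
  have hQz : Q = 0 := hzar Q hQ0
  have hall : ∀ i, lam i = 0 :=
    Fintype.linearIndependent_iff.1 hP (fun i => lam i) (by rw [← hQ, hQz])
  exact hlam0 (by ext i; exact hall i)

/-- The bounded solver. -/
lemma solver (J : ℕ) (P : Fin J → MvPolynomial (Fin d) ℝ)
    (hP : LinearIndependent ℝ P) (ν : ℕ) :
    ∃ C₀ : ℝ, 0 ≤ C₀ ∧ ∀ w : EuclideanSpace ℝ (Fin J), ∃ ρ : FM d, inK K ρ ∧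
      (∀ j, momP ρ (P j) = w j) ∧ mass ν ρ ≤ C₀ * ‖w‖ := by
  classical
  set S : Set (EuclideanSpace ℝ (Fin J)) := {v | ∃ x ∈ K, v = fun i =>
    MvPolynomial.eval (fun j => x j) (P i)} with hS
  have hspan := eval_span_top hzar J P hP
  have hptex : ∀ v : EuclideanSpace ℝ (Fin J), v ∈ S → ∃ x, x ∈ K ∧ v = fun i =>
      MvPolynomial.eval (fun j => x j) (P i) := by
    intro v hv
    obtain ⟨x, hx, he⟩ := hv
    exact ⟨x, hx, he⟩
  set pt : EuclideanSpace ℝ (Fin J) → Pt d := fun v =>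
    if h : v ∈ S then (hptex v h).choose else 0 with hptdef
  have hptK : ∀ v ∈ S, pt v ∈ K := by
    intro v hv
    rw [hptdef]
    simp only [dif_pos hv]
    exact (hptex v hv).choose_spec.1
  have hptv : ∀ v ∈ S, v = fun i => MvPolynomial.eval (fun j => (pt v) j) (P i) := by
    intro v hv
    rw [hptdef]
    simp only [dif_pos hv]
    exact (hptex v hv).choose_spec.2
  have hsingle : ∀ i : Fin J, ∃ ρ : FM d, inK K ρ ∧
      ∀ j, momP ρ (P j) = if j = i then (1:ℝ) else 0 := by
    intro i
    have hmem : (EuclideanSpace.single i (1:ℝ)) ∈ Submodule.span ℝ S := by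
      rw [hspan]; trivial
    rw [Submodule.mem_span_set] at hmem
    obtain ⟨cf, hsupp, hsum⟩ := hmem
    refine ⟨cf.support.toList.map (fun v => (pt v, cf v)), ?_, ?_⟩
    · intro q hq
      simp only [List.mem_map] at hq
      obtain ⟨v, hv, rfl⟩ := hq
      exact hptK v (hsupp (by simpa using hv))
    · intro j
      have e1 : momP (cf.support.toList.map (fun v => (pt v, cf v))) (P j)
          = ∑ v ∈ cf.support, cf v * MvPolynomial.eval (fun i => (pt v) i) (P j) := by
        rw [momP, momF, List.map_map, ← sum_map_toList]
        rfl
      have e2 : ∀ v ∈ cf.support, MvPolynomial.eval (fun i => (pt v) i) (P j) = v j := by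
        intro v hv
        have := hptv v (hsupp (by simpa using hv))
        exact (congrFun this j).symm
      have e3 : ∑ v ∈ cf.support, cf v * MvPolynomial.eval (fun i => (pt v) i) (P j)
          = ∑ v ∈ cf.support, cf v * v j :=
        Finset.sum_congr rfl fun v hv => by rw [e2 v hv]
      have e4 : (∑ v ∈ cf.support, cf v * v j) = (EuclideanSpace.single i (1:ℝ)) j := by
        have := congrArg (fun v : EuclideanSpace ℝ (Fin J) => v j) hsum
        rw [Finsupp.sum] at this
        rw [← this]
        rw [WithLp.ofLp_sum, Finset.sum_apply]
        rfl
      rw [e1, e3, e4, EuclideanSpace.single_apply]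
  choose ρs hρsK hρsmom using hsingle
  refine ⟨∑ i, mass ν (ρs i), Finset.sum_nonneg fun i _ => mass_nonneg ν (ρs i), ?_⟩
  intro w
  refine ⟨(List.finRange J).flatMap (fun i => scaleFM (w i) (ρs i)), ?_, ?_, ?_⟩
  · exact inK_flatMap (fun i _ => inK_scale (hρsK i) (w i))
  · intro j
    rw [momP, momF_flatMap]
    have : ∀ i : Fin J, momF (scaleFM (w i) (ρs i))
        (fun x => MvPolynomial.eval (fun k => x k) (P j)) = w i * (if j = i then 1 else 0) := by
      intro i
      rw [momF_scale]
      rw [show momF (ρs i) (fun x => MvPolynomial.eval (fun k => x k) (P j))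
        = momP (ρs i) (P j) from rfl, hρsmom i j]
    simp only [this]
    rw [← Fin.sum_univ_def]
    simp
  · rw [mass_flatMap]
    have hb : ∀ i : Fin J, mass ν (scaleFM (w i) (ρs i)) ≤ mass ν (ρs i) * ‖w‖ := by
      intro i
      rw [mass_scale]
      rw [mul_comm (mass ν (ρs i)) ‖w‖]
      exact mul_le_mul_of_nonneg_right (abs_coord_le_norm' w i) (mass_nonneg _ _)
    rw [← Fin.sum_univ_def]
    calc (∑ i, mass ν (scaleFM (w i) (ρs i))) ≤ ∑ i, mass ν (ρs i) * ‖w‖ :=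
          Finset.sum_le_sum fun i _ => hb i
      _ = (∑ i, mass ν (ρs i)) * ‖w‖ := by rw [Finset.sum_mul]
end UMP

namespace UMP
variable {d : ℕ} {K : Set (Pt d)}
variable (hzar : ∀ P : MvPolynomial (Fin d) ℝ,
    (∀ x ∈ K, MvPolynomial.eval (fun i => x i) P = 0) → P = 0)
include hzar

/-- Core lemma: targets that kill `U ∩ N_ν` are moment vectors of finitely supported
measures on `K` of arbitrarily small `ν`-mass. -/
lemma core (J ν : ℕ) (P : Fin J → MvPolynomial (Fin d) ℝ) (hP : LinearIndependent ℝ P)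
    (τ : EuclideanSpace ℝ (Fin J))
    (hvan : ∀ lam : EuclideanSpace ℝ (Fin J),
      (∑ i, lam i • P i) ∈ NS K ν → ∑ i, lam i * τ i = 0)
    (ε : ℝ) (hε : 0 < ε) :
    ∃ ρ : FM d, inK K ρ ∧ (∀ j, momP ρ (P j) = τ j) ∧ mass ν ρ ≤ ε := by
  classical
  obtain ⟨C₀, hC₀, hsol⟩ := solver hzar J P hP ν
  set V : Set (EuclideanSpace ℝ (Fin J)) := {w | ∃ ρ : FM d, inK K ρ ∧
    (∀ j, momP ρ (P j) = w j) ∧ mass ν ρ ≤ ε/2} with hV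
  have h0V : (0 : EuclideanSpace ℝ (Fin J)) ∈ V := by
    refine ⟨[], fun q hq => absurd hq List.not_mem_nil, fun j => rfl, ?_⟩
    simp [mass]
    positivity
  have hconv : Convex ℝ V := by
    rintro w₁ ⟨ρ₁, hK₁, hm₁, hms₁⟩ w₂ ⟨ρ₂, hK₂, hm₂, hms₂⟩ a b ha hb hab
    refine ⟨scaleFM a ρ₁ ++ scaleFM b ρ₂, inK_append (inK_scale hK₁ a) (inK_scale hK₂ b),
      fun j => ?_, ?_⟩
    · rw [momP, momF_append]
      have e1 : momF (scaleFM a ρ₁) (fun x => MvPolynomial.eval (fun i => x i) (P j))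
          = a * momP ρ₁ (P j) := momF_scale a ρ₁ _
      have e2 : momF (scaleFM b ρ₂) (fun x => MvPolynomial.eval (fun i => x i) (P j))
          = b * momP ρ₂ (P j) := momF_scale b ρ₂ _
      rw [e1, e2, hm₁ j, hm₂ j]
      rfl
    · rw [mass_append, mass_scale, mass_scale, abs_of_nonneg ha, abs_of_nonneg hb]
      calc a * mass ν ρ₁ + b * mass ν ρ₂ ≤ a * (ε/2) + b * (ε/2) :=
            add_le_add (mul_le_mul_of_nonneg_left hms₁ ha)
              (mul_le_mul_of_nonneg_left hms₂ hb)
        _ = ε/2 := by rw [← add_mul, hab, one_mul]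
  have hτcl : τ ∈ closure V := by
    by_contra hτ
    obtain ⟨f, u, hfb, hfτ⟩ :=
      geometric_hahn_banach_closed_point (hconv.closure) isClosed_closure hτ
    have hu0 : 0 < u := by
      have := hfb 0 (subset_closure h0V)
      simpa using this
    set lamf : Fin J → ℝ := fun i => f (EuclideanSpace.single i (1:ℝ)) with hlamf
    have hf_eval : ∀ w : EuclideanSpace ℝ (Fin J), f w = ∑ i, w i * lamf i := by
      intro w
      have hrepr : w = ∑ i, w i • (EuclideanSpace.basisFun (Fin J) ℝ) i := by
        have := (EuclideanSpace.basisFun (Fin J) ℝ).sum_repr w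
        simp only [EuclideanSpace.basisFun_repr] at this
        exact this.symm
      conv_lhs => rw [hrepr]
      rw [map_sum]
      refine Finset.sum_congr rfl fun i _ => ?_
      rw [f.map_smul, smul_eq_mul]
      congr 1
      rw [hlamf]
      congr 1
      simp [EuclideanSpace.basisFun_apply]
    set Q : MvPolynomial (Fin d) ℝ := ∑ i, lamf i • P i with hQ
    have hQN : Q ∈ NS K ν := by
      refine ⟨2 * u / ε, fun x hx => ?_⟩
      set wt : ℝ := (ε/2) / (1 + ‖x‖) ^ ν with hwt
      have hwtpos : 0 < wt := by
        rw [hwt]; positivity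
      set wx : EuclideanSpace ℝ (Fin J) := WithLp.toLp 2 fun j => wt * MvPolynomial.eval
        (fun i => x i) (P j) with hwx
      have hmemwx : wx ∈ V := by
        refine ⟨[(x, wt)], fun q hq => ?_, fun j => ?_, ?_⟩
        · rcases List.mem_singleton.1 hq with h
          rw [h]; exact hx
        · simp [momP, momF, hwx]
        · have hppos : (0:ℝ) < (1 + ‖x‖) ^ ν := by positivity
          have : mass ν [(x, wt)] = |wt| * (1 + ‖x‖) ^ ν := by simp [mass]
          rw [this, abs_of_pos hwtpos, hwt, div_mul_cancel₀ _ (ne_of_gt hppos)]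
      have hmemwx' : -wx ∈ V := by
        obtain ⟨ρ, h1, h2, h3⟩ := hmemwx
        refine ⟨scaleFM (-1) ρ, inK_scale h1 _, fun j => ?_, ?_⟩
        · have := momF_scale (-1) ρ (fun y => MvPolynomial.eval (fun i => y i) (P j))
          rw [momP, this]
          rw [show momF ρ (fun y => MvPolynomial.eval (fun i => y i) (P j))
            = momP ρ (P j) from rfl, h2 j]
          simp
        · rw [mass_scale]; simpa using h3
      have hb1 := hfb wx (subset_closure hmemwx)
      have hb2 := hfb (-wx) (subset_closure hmemwx')
      rw [map_neg] at hb2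
      have habs : |f wx| < u := abs_lt.2 ⟨by linarith, hb1⟩
      have hfwx : f wx = wt * MvPolynomial.eval (fun i => x i) Q := by
        rw [hf_eval wx, hQ, map_sum]
        rw [Finset.mul_sum]
        refine Finset.sum_congr rfl fun i _ => ?_
        rw [MvPolynomial.smul_eq_C_mul, map_mul, MvPolynomial.eval_C, hwx]
        ring
      rw [hfwx] at habs
      rw [abs_mul, abs_of_pos hwtpos] at habs
      rw [mul_one]
      have hppos : (0:ℝ) < (1 + ‖x‖) ^ ν := by positivity
      have h6 : |MvPolynomial.eval (fun i => x i) Q| ≤ u / wt := by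
        rw [le_div_iff₀ hwtpos]
        nlinarith [habs]
      refine h6.trans_eq ?_
      rw [hwt]
      field_simp
    have hzero := hvan (WithLp.toLp 2 lamf) hQN
    have hfτval : f τ = ∑ i, τ i * lamf i := hf_eval τ
    have : f τ = 0 := by
      rw [hfτval, ← hzero]
      refine Finset.sum_congr rfl fun i _ => mul_comm _ _
    linarith
  -- extract an approximation and correct it
  have hδ : (0:ℝ) < ε / (2 * (C₀ + 1)) := by positivity
  obtain ⟨s, hsV, hdist⟩ := Metric.mem_closure_iff.1 hτcl _ hδ
  obtain ⟨ρ₁, hρ₁K, hρ₁m, hρ₁mass⟩ := hsV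
  obtain ⟨ρ₂, hρ₂K, hρ₂m, hρ₂mass⟩ := hsol (τ - s)
  refine ⟨ρ₁ ++ ρ₂, inK_append hρ₁K hρ₂K, fun j => ?_, ?_⟩
  · rw [momP, momF_append]
    rw [show momF ρ₁ (fun x => MvPolynomial.eval (fun i => x i) (P j))
      = momP ρ₁ (P j) from rfl, hρ₁m j]
    rw [show momF ρ₂ (fun x => MvPolynomial.eval (fun i => x i) (P j))
      = momP ρ₂ (P j) from rfl, hρ₂m j]
    have : (τ - s) j = τ j - s j := rfl
    rw [this]
    ring
  · rw [mass_append]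
    have h2 : mass ν ρ₂ ≤ ε / 2 := by
      refine hρ₂mass.trans ?_
      have hn : ‖τ - s‖ < ε / (2 * (C₀ + 1)) := by
        rw [← dist_eq_norm]
        exact hdist
      calc C₀ * ‖τ - s‖ ≤ C₀ * (ε / (2 * (C₀ + 1))) :=
            mul_le_mul_of_nonneg_left (le_of_lt hn) hC₀
        _ ≤ ε / 2 := by
            have hD : (0:ℝ) < 2 * (C₀ + 1) := by positivity
            rw [mul_div_assoc']
            rw [div_le_div_iff₀ hD two_pos]
            nlinarith
    linarith
end UMP

namespace UMP
variable {d : ℕ} {K : Set (Pt d)}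

lemma moments_on_basis {J : ℕ} {U : Submodule ℝ (MvPolynomial (Fin d) ℝ)}
    (b : Module.Basis (Fin J) ℝ U) (ρ : FM d) (G : MvPolynomial (Fin d) ℝ →ₗ[ℝ] ℝ)
    (h : ∀ i, momP ρ ((b i : U) : MvPolynomial (Fin d) ℝ)
      = G ((b i : U) : MvPolynomial (Fin d) ℝ)) :
    ∀ P ∈ U, momP ρ P = G P := by
  intro P hP
  set p : U := ⟨P, hP⟩ with hp
  have h0 := b.sum_repr p
  have h1 : P = ∑ i, b.repr p i • ((b i : U) : MvPolynomial (Fin d) ℝ) := by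
    have h2 := congrArg (U.subtype) h0
    rw [map_sum] at h2
    simp only [_root_.map_smul, Submodule.subtype_apply] at h2
    exact h2.symm
  calc momP ρ P = momPL ρ P := rfl
    _ = ∑ i, b.repr p i • momPL ρ ((b i : U) : MvPolynomial (Fin d) ℝ) := by
        conv_lhs => rw [h1]
        rw [map_sum]
        exact Finset.sum_congr rfl fun i _ => by rw [_root_.map_smul]
    _ = ∑ i, b.repr p i • G ((b i : U) : MvPolynomial (Fin d) ℝ) := by
        exact Finset.sum_congr rfl fun i _ => by rw [momPL_apply, h i]
    _ = G P := by
        conv_rhs => rw [h1, map_sum]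
        exact Finset.sum_congr rfl fun i _ => by rw [_root_.map_smul]

lemma basis_family_li {J : ℕ} {U : Submodule ℝ (MvPolynomial (Fin d) ℝ)}
    (b : Module.Basis (Fin J) ℝ U) :
    LinearIndependent ℝ (fun i => ((b i : U) : MvPolynomial (Fin d) ℝ)) := by
  have := b.linearIndependent.map' U.subtype (Submodule.ker_subtype U)
  exact this

variable (hzar : ∀ P : MvPolynomial (Fin d) ℝ,
    (∀ x ∈ K, MvPolynomial.eval (fun i => x i) P = 0) → P = 0)
include hzar

set_option synthInstance.maxHeartbeats 1000000 in
lemma stage_zero (hfd : FiniteDimensional ℝ (NS K 0)) (L : MvPolynomial (Fin d) ℝ →ₗ[ℝ] ℝ) :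
    ∃ ρ : FM d, inK K ρ ∧ ∀ P ∈ NS K 0, momP ρ P = L P := by
  classical
  haveI := hfd
  set b := Module.finBasis ℝ (NS K 0) with hb
  set Pfam : Fin (Module.finrank ℝ (NS K 0)) → MvPolynomial (Fin d) ℝ :=
    fun i => ((b i : NS K 0) : MvPolynomial (Fin d) ℝ) with hPfam
  obtain ⟨C₀, _, hsol⟩ := solver hzar _ Pfam (basis_family_li b) 0
  obtain ⟨ρ, hKρ, hm, _⟩ := hsol (WithLp.toLp 2 fun i => L (Pfam i))
  exact ⟨ρ, hKρ, moments_on_basis b ρ L (fun i => by rw [hm i])⟩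

set_option synthInstance.maxHeartbeats 1000000 in
lemma stage_succ (n : ℕ) (hfd : FiniteDimensional ℝ (NS K (n+1)))
    (L : MvPolynomial (Fin d) ℝ →ₗ[ℝ] ℝ) (σ : FM d)
    (hσ : ∀ P ∈ NS K n, momP σ P = L P) :
    ∃ ρ : FM d, inK K ρ ∧ (∀ P ∈ NS K (n+1), momP ρ P = L P - momP σ P) ∧
      ∀ m, m ≤ n → mass m ρ ≤ (1/2 : ℝ)^(n+1) := by
  classical
  haveI := hfd
  set b := Module.finBasis ℝ (NS K (n+1)) with hb
  set Pfam : Fin (Module.finrank ℝ (NS K (n+1))) → MvPolynomial (Fin d) ℝ :=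
    fun i => ((b i : NS K (n+1)) : MvPolynomial (Fin d) ℝ) with hPfam
  set G : MvPolynomial (Fin d) ℝ →ₗ[ℝ] ℝ := L - momPL σ with hG
  set τ : EuclideanSpace ℝ (Fin (Module.finrank ℝ (NS K (n+1)))) :=
    WithLp.toLp 2 fun i => G (Pfam i) with hτ
  have hvan : ∀ lam : EuclideanSpace ℝ (Fin (Module.finrank ℝ (NS K (n+1)))),
      (∑ i, lam i • Pfam i) ∈ NS K n → ∑ i, lam i * τ i = 0 := by
    intro lam hmem
    set Q : MvPolynomial (Fin d) ℝ := ∑ i, lam i • Pfam i with hQ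
    have hGQ : G Q = ∑ i, lam i * τ i := by
      rw [hQ, map_sum]
      exact Finset.sum_congr rfl fun i _ => by
        rw [_root_.map_smul, smul_eq_mul, hτ]
    rw [← hGQ, hG, LinearMap.sub_apply, momPL_apply, hσ Q hmem, sub_self]
  obtain ⟨ρ, hKρ, hm, hmass⟩ := core hzar _ n Pfam (basis_family_li b) τ hvan
    ((1/2 : ℝ)^(n+1)) (by positivity)
  refine ⟨ρ, hKρ, ?_, ?_⟩
  · have := moments_on_basis b ρ G (fun i => by rw [hm i])
    intro P hP
    have h2 := this P hP
    rw [hG, LinearMap.sub_apply, momPL_apply] at h2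
    exact h2
  · intro m hm'
    exact (mass_mono_exp hm' ρ).trans hmass

lemma batches_exist (hfin : ∀ n, FiniteDimensional ℝ (NS K n))
    (L : MvPolynomial (Fin d) ℝ →ₗ[ℝ] ℝ) :
    ∃ batch : ℕ → FM d, (∀ n, inK K (batch n)) ∧
      (∀ n m, m + 1 ≤ n → mass m (batch n) ≤ (1/2 : ℝ)^n) ∧
      (∀ n m, m + 1 ≤ n → ∀ P ∈ NS K m, momP (batch n) P = 0) ∧
      (∀ n, ∀ P ∈ NS K n, (∑ j ∈ Finset.range (n+1), momP (batch j) P) = L P) := by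
  classical
  -- the state: (cumulative measure, last batch) with invariants
  let State : ℕ → Type _ := fun n => {q : FM d × FM d // inK K q.1 ∧ inK K q.2 ∧
    (∀ P ∈ NS K n, momP q.1 P = L P) ∧
    (∀ m, m + 1 ≤ n → ∀ P ∈ NS K m, momP q.2 P = 0) ∧
    (∀ m, m + 1 ≤ n → mass m q.2 ≤ (1/2 : ℝ)^n)}
  have hex0 := stage_zero hzar (hfin 0) L
  let hinit : State 0 := ⟨(Classical.choose hex0, Classical.choose hex0),
    (Classical.choose_spec hex0).1, (Classical.choose_spec hex0).1,
    (Classical.choose_spec hex0).2, fun m hm => absurd hm (by omega),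
    fun m hm => absurd hm (by omega)⟩
  let step : ∀ n, State n → State (n+1) := fun n s =>
    ⟨(s.1.1 ++ Classical.choose (stage_succ hzar n (hfin (n+1)) L s.1.1 s.2.2.2.1),
      Classical.choose (stage_succ hzar n (hfin (n+1)) L s.1.1 s.2.2.2.1)),
      by
        obtain ⟨h1, h2, h3, h4, h5⟩ := s.2
        obtain ⟨g1, g2, g3⟩ := Classical.choose_spec
          (stage_succ hzar n (hfin (n+1)) L s.1.1 h3)
        refine ⟨inK_append h1 g1, g1, ?_, ?_, ?_⟩
        · intro P hP
          rw [momP, momF_append]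
          rw [show momF (Classical.choose (stage_succ hzar n (hfin (n+1)) L s.1.1 h3))
            (fun x => MvPolynomial.eval (fun i => x i) P)
            = momP (Classical.choose (stage_succ hzar n (hfin (n+1)) L s.1.1 h3)) P
            from rfl, g2 P hP]
          rw [show momF s.1.1 (fun x => MvPolynomial.eval (fun i => x i) P)
            = momP s.1.1 P from rfl]
          ring
        · intro m hm P hP
          have hPn : P ∈ NS K n := NS_mono (by omega) hP
          have hPn1 : P ∈ NS K (n+1) := NS_mono (by omega) hP
          rw [g2 P hPn1, h3 P hPn, sub_self]
        · intro m hm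
          exact g3 m (by omega)⟩
  let cum : ∀ n, State n := fun n => Nat.rec hinit step n
  let batch : ℕ → FM d := fun n => (cum n).1.2
  have hcoh : ∀ n, (cum (n+1)).1.1 = (cum n).1.1 ++ batch (n+1) := fun n => rfl
  have htot : ∀ n (P : MvPolynomial (Fin d) ℝ),
      momP ((cum n).1.1) P = ∑ j ∈ Finset.range (n+1), momP (batch j) P := by
    intro n
    induction n with
    | zero => intro P; simp [batch]; rfl
    | succ n ih =>
      intro P
      rw [Finset.sum_range_succ, ← ih P, hcoh n, momP, momF_append]
      rfl
  refine ⟨batch, fun n => (cum n).2.2.1, fun n m hm => (cum n).2.2.2.2.2 m hm,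
    fun n m hm => (cum n).2.2.2.2.1 m hm, fun n P hP => ?_⟩
  rw [← htot n P]
  exact (cum n).2.2.2.1 P hP
end UMP

namespace UMP
open MeasureTheory
variable {d : ℕ} {K : Set (Pt d)}

lemma list_map_sum_range {α M : Type*} [AddCommMonoid M] (l : List α) (f : α → M) (d₀ : α) :
    (l.map f).sum = ∑ k ∈ Finset.range l.length, f (l.getD k d₀) := by
  induction l with
  | nil => simp
  | cons a t ih =>
    rw [List.map_cons, List.sum_cons, List.length_cons, Finset.sum_range_succ', ih]
    simp only [List.getD_cons_succ, List.getD_cons_zero]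
    rw [add_comm]

lemma toReal_ofReal_max (w : ℝ) : (ENNReal.ofReal w).toReal = max w 0 := by
  rcases le_total w 0 with h | h
  · rw [ENNReal.ofReal_eq_zero.2 h]
    simp [max_eq_right h]
  · rw [ENNReal.toReal_ofReal h, max_eq_left h]

lemma max_sub_max_neg (w : ℝ) : max w 0 - max (-w) 0 = w := by
  rcases le_total 0 w with h | h
  · rw [max_eq_left h, max_eq_right (by linarith : -w ≤ 0)]; ring
  · rw [max_eq_right h, max_eq_left (by linarith : 0 ≤ -w)]; ring

/-- Assembling a summable sequence of finitely supported measures into a signed measure. -/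
lemma assemble (hKcl : IsClosed K) (batch : ℕ → FM d) (hbK : ∀ n, inK K (batch n))
    (hsum : ∀ m : ℕ, Summable (fun n => mass m (batch n))) :
    ∃ μ : MeasureTheory.SignedMeasure (Pt d),
      (∀ n : ℕ, Integrable (fun x => (1 + ‖x‖) ^ n) μ.totalVariation) ∧
      μ.totalVariation Kᶜ = 0 ∧
      ∀ (f : Pt d → ℝ) (m : ℕ), Continuous f → (∀ x, |f x| ≤ (1 + ‖x‖) ^ m) →
        HasSum (fun n => momF (batch n) f) (sintegral μ f) := by
  classical
  set pt : ℕ × ℕ → Pt d := fun p => ((batch p.1).getD p.2 (0, 0)).1 with hpt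
  set wt : ℕ × ℕ → ℝ := fun p => ((batch p.1).getD p.2 (0, 0)).2 with hwt
  have hwt0 : ∀ p : ℕ × ℕ, (batch p.1).length ≤ p.2 → wt p = 0 := by
    intro p hp
    rw [hwt]
    simp only
    rw [List.getD_eq_default _ _ hp]
  have hptK : ∀ p : ℕ × ℕ, p.2 < (batch p.1).length → pt p ∈ K := by
    intro p hp
    have hmem : (batch p.1).getD p.2 (0, 0) ∈ batch p.1 := by
      rw [List.getD_eq_getElem _ _ hp]
      exact List.getElem_mem _
    exact hbK p.1 _ hmem
  set Pos : Measure (Pt d) :=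
    Measure.sum (fun p : ℕ × ℕ => ENNReal.ofReal (wt p) • Measure.dirac (pt p)) with hPos
  set Neg : Measure (Pt d) :=
    Measure.sum (fun p : ℕ × ℕ => ENNReal.ofReal (-wt p) • Measure.dirac (pt p)) with hNeg
  -- lintegral computation
  have hlint : ∀ (v : ℕ × ℕ → ℝ) (g : Pt d → ENNReal), Measurable g →
      ∫⁻ x, g x ∂(Measure.sum fun p : ℕ × ℕ => ENNReal.ofReal (v p) • Measure.dirac (pt p))
      = ∑' p : ℕ × ℕ, ENNReal.ofReal (v p) * g (pt p) := by
    intro v g hg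
    rw [lintegral_sum_measure]
    exact tsum_congr fun p => by rw [lintegral_smul_measure, lintegral_dirac' _ hg, smul_eq_mul]
  -- real inner sums
  have hinnerR : ∀ (m n : ℕ),
      (∑' k : ℕ, |wt (n, k)| * (1 + ‖pt (n, k)‖) ^ m) = mass m (batch n) := by
    intro m n
    rw [tsum_eq_sum (s := Finset.range (batch n).length) (fun k hk => by
      have hk' : (batch n).length ≤ k := by simpa [Finset.mem_range, not_lt] using hk
      rw [hwt0 (n, k) hk']
      simp)]
    rw [mass, list_map_sum_range _ _ ((0 : Pt d), (0:ℝ))]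
  have hinner : ∀ (m n : ℕ),
      (∑' k : ℕ, ENNReal.ofReal (|wt (n, k)| * (1 + ‖pt (n, k)‖) ^ m))
      = ENNReal.ofReal (mass m (batch n)) := by
    intro m n
    rw [tsum_eq_sum (s := Finset.range (batch n).length) (fun k hk => by
      have hk' : (batch n).length ≤ k := by simpa [Finset.mem_range, not_lt] using hk
      rw [hwt0 (n, k) hk']
      simp)]
    rw [← ENNReal.ofReal_sum_of_nonneg (fun k _ => by positivity)]
    congr 1
    rw [mass, list_map_sum_range _ _ ((0 : Pt d), (0:ℝ))]
  -- the global ENNReal bound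
  have hbound : ∀ (m : ℕ) (v : ℕ × ℕ → ℝ), (∀ p, |v p| ≤ |wt p|) →
      (∑' p : ℕ × ℕ, ENNReal.ofReal (v p) * ENNReal.ofReal ((1 + ‖pt p‖) ^ m))
      ≤ ENNReal.ofReal (∑' n, mass m (batch n)) := by
    intro m v hv
    have h1 : ∀ p : ℕ × ℕ, ENNReal.ofReal (v p) * ENNReal.ofReal ((1 + ‖pt p‖) ^ m)
        ≤ ENNReal.ofReal (|wt p| * (1 + ‖pt p‖) ^ m) := by
      intro p
      rw [ENNReal.ofReal_mul (abs_nonneg _)]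
      exact mul_le_mul' (ENNReal.ofReal_le_ofReal ((le_abs_self _).trans (hv p))) le_rfl
    refine (ENNReal.tsum_le_tsum h1).trans (le_of_eq ?_)
    calc (∑' p : ℕ × ℕ, ENNReal.ofReal (|wt p| * (1 + ‖pt p‖) ^ m))
        = ∑' (n : ℕ) (k : ℕ), ENNReal.ofReal (|wt (n, k)| * (1 + ‖pt (n, k)‖) ^ m) :=
          ENNReal.tsum_prod (f := fun n k => ENNReal.ofReal (|wt (n, k)| * (1 + ‖pt (n, k)‖) ^ m))
      _ = ∑' n : ℕ, ENNReal.ofReal (mass m (batch n)) := tsum_congr (hinner m)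
      _ = ENNReal.ofReal (∑' n, mass m (batch n)) :=
          (ENNReal.ofReal_tsum_of_nonneg (fun n => mass_nonneg m _) (hsum m)).symm
  -- finiteness
  have hfin : ∀ (v : ℕ × ℕ → ℝ), (∀ p, |v p| ≤ |wt p|) →
      IsFiniteMeasure (Measure.sum fun p : ℕ × ℕ => ENNReal.ofReal (v p) • Measure.dirac (pt p)) := by
    intro v hv
    constructor
    have h1 : (Measure.sum fun p : ℕ × ℕ => ENNReal.ofReal (v p) • Measure.dirac (pt p)) Set.univ
        = ∑' p : ℕ × ℕ, ENNReal.ofReal (v p) * Measure.dirac (pt p) Set.univ := by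
      rw [Measure.sum_apply _ MeasurableSet.univ]
      exact tsum_congr fun p => by rw [Measure.smul_apply, smul_eq_mul]
    rw [h1]
    have h2 : ∀ p : ℕ × ℕ, ENNReal.ofReal (v p) * Measure.dirac (pt p) Set.univ
        = ENNReal.ofReal (v p) * ENNReal.ofReal ((1 + ‖pt p‖) ^ 0) := by
      intro p
      simp
    rw [tsum_congr h2]
    exact lt_of_le_of_lt (hbound 0 v hv) ENNReal.ofReal_lt_top
  -- integrability of polynomially bounded continuous functions
  have hintf : ∀ (v : ℕ × ℕ → ℝ), (∀ p, |v p| ≤ |wt p|) → ∀ (f : Pt d → ℝ) (m : ℕ),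
      Continuous f → (∀ x, |f x| ≤ (1 + ‖x‖) ^ m) →
      Integrable f (Measure.sum fun p : ℕ × ℕ => ENNReal.ofReal (v p) • Measure.dirac (pt p)) := by
    intro v hv f m hf hfb
    refine ⟨hf.aestronglyMeasurable, ?_⟩
    show (∫⁻ x, ‖f x‖₊ ∂_) < ⊤
    have hg : Measurable fun x : Pt d => (‖f x‖₊ : ENNReal) := hf.measurable.nnnorm.coe_nnreal_ennreal
    rw [hlint v _ hg]
    have h1 : ∀ p : ℕ × ℕ, ENNReal.ofReal (v p) * (‖f (pt p)‖₊ : ENNReal)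
        ≤ ENNReal.ofReal (v p) * ENNReal.ofReal ((1 + ‖pt p‖) ^ m) := by
      intro p
      refine mul_le_mul' le_rfl ?_
      rw [← enorm_eq_nnnorm, Real.enorm_eq_ofReal_abs]
      exact ENNReal.ofReal_le_ofReal (hfb (pt p))
    exact lt_of_le_of_lt ((ENNReal.tsum_le_tsum h1).trans (hbound m v hv)) ENNReal.ofReal_lt_top
  -- integral values
  have hval : ∀ (v : ℕ × ℕ → ℝ) (f : Pt d → ℝ), Continuous f →
      Integrable f (Measure.sum fun p : ℕ × ℕ => ENNReal.ofReal (v p) • Measure.dirac (pt p)) →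
      (∫ x, f x ∂(Measure.sum fun p : ℕ × ℕ => ENNReal.ofReal (v p) • Measure.dirac (pt p)))
        = ∑' p : ℕ × ℕ, max (v p) 0 * f (pt p) := by
    intro v f hf hint
    rw [integral_sum_measure hint]
    exact tsum_congr fun p => by
      rw [integral_smul_measure, integral_dirac' _ _ hf.stronglyMeasurable, toReal_ofReal_max,
        smul_eq_mul]
  haveI hPosFin : IsFiniteMeasure Pos := hfin wt (fun p => le_rfl)
  haveI hNegFin : IsFiniteMeasure Neg := hfin (fun p => -wt p) (fun p => by rw [abs_neg])
  set s : SignedMeasure (Pt d) := Pos.toSignedMeasure - Neg.toSignedMeasure with hs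
  -- Jordan part bounds
  obtain ⟨i, hi₁, hi₂, hi₃, hjpos, hjneg⟩ := s.toJordanDecomposition_spec
  have hsapp : ∀ (A : Set (Pt d)), MeasurableSet A → s A = (Pos A).toReal - (Neg A).toReal := by
    intro A hA
    rw [hs, Measure.toSignedMeasure_sub_apply hA, measureReal_def, measureReal_def]
  have hjd_pos : s.toJordanDecomposition.posPart ≤ Pos := by
    rw [hjpos, Measure.le_iff]
    intro A hA
    rw [SignedMeasure.toMeasureOfZeroLE_apply _ hi₂ hi₁ hA]
    have hle : s (i ∩ A) ≤ (Pos A).toReal := by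
      rw [hsapp _ (hi₁.inter hA)]
      have h1 : (Pos (i ∩ A)).toReal ≤ (Pos A).toReal :=
        ENNReal.toReal_mono (measure_ne_top _ _) (measure_mono Set.inter_subset_right)
      have h2 : (0:ℝ) ≤ (Neg (i ∩ A)).toReal := ENNReal.toReal_nonneg
      linarith
    rw [← ENNReal.ofReal_eq_coe_nnreal]
    calc ENNReal.ofReal (s (i ∩ A)) ≤ ENNReal.ofReal ((Pos A).toReal) :=
          ENNReal.ofReal_le_ofReal hle
      _ = Pos A := ENNReal.ofReal_toReal (measure_ne_top _ _)
  have hjd_neg : s.toJordanDecomposition.negPart ≤ Neg := by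
    rw [hjneg, Measure.le_iff]
    intro A hA
    rw [SignedMeasure.toMeasureOfLEZero_apply _ hi₃ hi₁.compl hA]
    have hle : -s (iᶜ ∩ A) ≤ (Neg A).toReal := by
      rw [hsapp _ (hi₁.compl.inter hA)]
      have h1 : (Neg (iᶜ ∩ A)).toReal ≤ (Neg A).toReal :=
        ENNReal.toReal_mono (measure_ne_top _ _) (measure_mono Set.inter_subset_right)
      have h2 : (0:ℝ) ≤ (Pos (iᶜ ∩ A)).toReal := ENNReal.toReal_nonneg
      linarith
    rw [← ENNReal.ofReal_eq_coe_nnreal]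
    calc ENNReal.ofReal (-s (iᶜ ∩ A)) ≤ ENNReal.ofReal ((Neg A).toReal) :=
          ENNReal.ofReal_le_ofReal hle
      _ = Neg A := ENNReal.ofReal_toReal (measure_ne_top _ _)
  have htv : s.totalVariation = s.toJordanDecomposition.posPart
      + s.toJordanDecomposition.negPart := rfl
  have htv_le : ∀ (A : Set (Pt d)), MeasurableSet A → s.totalVariation A ≤ Pos A + Neg A := by
    intro A hA
    rw [htv, Measure.add_apply]
    exact add_le_add (hjd_pos A) (hjd_neg A)
  -- vanishing off K
  have hKm : MeasurableSet Kᶜ := hKcl.measurableSet.compl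
  have hPosK : ∀ (v : ℕ × ℕ → ℝ), (∀ p, |v p| ≤ |wt p|) →
      (Measure.sum fun p : ℕ × ℕ => ENNReal.ofReal (v p) • Measure.dirac (pt p)) Kᶜ = 0 := by
    intro v hv
    rw [Measure.sum_apply _ hKm]
    have h1 : ∀ p : ℕ × ℕ, (ENNReal.ofReal (v p) • Measure.dirac (pt p)) Kᶜ = 0 := by
      intro p
      rw [Measure.smul_apply, smul_eq_mul]
      rcases lt_or_ge p.2 (batch p.1).length with hlen | hlen
      · rw [Measure.dirac_apply' _ hKm, Set.indicator_of_notMem (by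
          simpa using hptK p hlen)]
        simp
      · have : v p = 0 := by
          have h2 := hv p
          rw [hwt0 p hlen] at h2
          simpa using abs_nonpos_iff.1 (by simpa using h2)
        rw [this]
        simp
    rw [tsum_congr h1, tsum_zero]
  refine ⟨s, ?_, ?_, ?_⟩
  · -- integrability of all weights against the total variation
    intro n
    have hc : Continuous (fun x : Pt d => (1 + ‖x‖) ^ n) := by fun_prop
    have hbnd : ∀ x : Pt d, |(1 + ‖x‖) ^ n| ≤ (1 + ‖x‖) ^ n := fun x =>
      le_of_eq (abs_of_nonneg (by positivity))
    have hintP := hintf wt (fun p => le_rfl) _ n hc hbnd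
    have hintN := hintf (fun p => -wt p) (fun p => by rw [abs_neg]) _ n hc hbnd
    have h1 : Integrable (fun x : Pt d => (1 + ‖x‖) ^ n) (Pos + Neg) :=
      integrable_add_measure.2 ⟨hintP, hintN⟩
    refine h1.mono_measure ?_
    rw [Measure.le_iff]
    exact htv_le
  · -- vanishing off K
    refine le_antisymm ?_ zero_le
    calc s.totalVariation Kᶜ ≤ Pos Kᶜ + Neg Kᶜ := htv_le Kᶜ hKm
      _ = 0 := by
          rw [hPos, hNeg, hPosK wt (fun p => le_rfl),
            hPosK (fun p => -wt p) (fun p => by rw [abs_neg]), add_zero]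
  · -- the moment formula
    intro f m hf hfb
    have hintP := hintf wt (fun p => le_rfl) f m hf hfb
    have hintN := hintf (fun p => -wt p) (fun p => by rw [abs_neg]) f m hf hfb
    -- summability of the dominating family
    set G : ℕ × ℕ → ℝ := fun p => |wt p| * (1 + ‖pt p‖) ^ m with hG
    have hGnn : ∀ p, 0 ≤ G p := fun p => by rw [hG]; positivity
    have hGsum : Summable G := by
      rw [summable_prod_of_nonneg hGnn]
      constructor
      · intro n
        refine summable_of_ne_finset_zero (s := Finset.range (batch n).length) ?_
        intro k hk
        have hk' : (batch n).length ≤ k := by simpa [Finset.mem_range, not_lt] using hk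
        rw [hG]
        simp only
        rw [hwt0 (n, k) hk']
        simp
      · have he : (fun n => ∑' k, G (n, k)) = fun n => mass m (batch n) := by
          funext n
          exact hinnerR m n
        rw [he]
        exact hsum m
    have hdom : ∀ (v : ℕ × ℕ → ℝ), (∀ p, |v p| ≤ |wt p|) →
        Summable (fun p : ℕ × ℕ => v p * f (pt p)) := by
      intro v hv
      refine Summable.of_abs (Summable.of_nonneg_of_le (fun p => abs_nonneg _)
        (fun p => ?_) hGsum)
      rw [abs_mul, hG]
      exact mul_le_mul (hv p) (hfb (pt p)) (abs_nonneg _)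
        (abs_nonneg _)
    -- integrability with respect to the Jordan parts
    have hiJP : Integrable f s.toJordanDecomposition.posPart := hintP.mono_measure hjd_pos
    have hiJN : Integrable f s.toJordanDecomposition.negPart := hintN.mono_measure hjd_neg
    -- measure identity
    have hmeq : s.toJordanDecomposition.posPart + Neg = Pos + s.toJordanDecomposition.negPart := by
      apply Measure.ext
      intro A hA
      have e1 : s A = (Pos A).toReal - (Neg A).toReal := hsapp A hA
      have e2 : s A = (s.toJordanDecomposition.posPart A).toReal
          - (s.toJordanDecomposition.negPart A).toReal := by
        conv_lhs => rw [← s.toSignedMeasure_toJordanDecomposition]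
        have hd : s.toJordanDecomposition.toSignedMeasure
            = s.toJordanDecomposition.posPart.toSignedMeasure
              - s.toJordanDecomposition.negPart.toSignedMeasure := rfl
        rw [hd, Measure.toSignedMeasure_sub_apply hA, measureReal_def, measureReal_def]
      have f1 : s.toJordanDecomposition.posPart A ≠ ⊤ := measure_ne_top _ _
      have f2 : s.toJordanDecomposition.negPart A ≠ ⊤ := measure_ne_top _ _
      have f3 : Pos A ≠ ⊤ := measure_ne_top _ _
      have f4 : Neg A ≠ ⊤ := measure_ne_top _ _
      rw [Measure.add_apply, Measure.add_apply]
      refine (ENNReal.toReal_eq_toReal_iff' (by exact ENNReal.add_ne_top.2 ⟨f1, f4⟩)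
        (by exact ENNReal.add_ne_top.2 ⟨f3, f2⟩)).1 ?_
      rw [ENNReal.toReal_add f1 f4, ENNReal.toReal_add f3 f2]
      linarith
    have hieq : (∫ x, f x ∂s.toJordanDecomposition.posPart) + ∫ x, f x ∂Neg
        = (∫ x, f x ∂Pos) + ∫ x, f x ∂s.toJordanDecomposition.negPart := by
      rw [← integral_add_measure hiJP hintN, ← integral_add_measure hintP hiJN, hmeq]
    have hsint : sintegral s f = (∫ x, f x ∂Pos) - ∫ x, f x ∂Neg := by
      unfold sintegral
      linarith
    have hvP : (∫ x, f x ∂Pos) = ∑' p : ℕ × ℕ, max (wt p) 0 * f (pt p) :=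
      hval wt f hf hintP
    have hvN : (∫ x, f x ∂Neg) = ∑' p : ℕ × ℕ, max (-wt p) 0 * f (pt p) :=
      hval _ f hf hintN
    have habsmax : ∀ w : ℝ, |max w 0| ≤ |w| := by
      intro w
      rw [abs_of_nonneg (le_max_right _ _)]
      exact max_le (le_abs_self _) (abs_nonneg _)
    have hsumP : Summable (fun p : ℕ × ℕ => max (wt p) 0 * f (pt p)) :=
      hdom _ (fun p => habsmax _)
    have hsumN : Summable (fun p : ℕ × ℕ => max (-wt p) 0 * f (pt p)) :=
      hdom _ (fun p => (habsmax _).trans (by rw [abs_neg]))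
    have hdiff : sintegral s f = ∑' p : ℕ × ℕ, wt p * f (pt p) := by
      rw [hsint, hvP, hvN, ← hsumP.tsum_sub hsumN]
      exact tsum_congr fun p => by rw [← sub_mul, max_sub_max_neg]
    have hFsum : Summable (fun p : ℕ × ℕ => wt p * f (pt p)) := hdom wt (fun p => le_rfl)
    have hfib : ∀ n : ℕ, HasSum (fun k => wt (n, k) * f (pt (n, k))) (momF (batch n) f) := by
      intro n
      have hzero : ∀ k ∉ Finset.range (batch n).length, wt (n, k) * f (pt (n, k)) = 0 := by
        intro k hk
        have hk' : (batch n).length ≤ k := by simpa [Finset.mem_range, not_lt] using hk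
        rw [hwt0 (n, k) hk', zero_mul]
      have h1 : HasSum (fun k => wt (n, k) * f (pt (n, k))) _ := hasSum_sum_of_ne_finset_zero hzero
      have h2 : (∑ k ∈ Finset.range (batch n).length, wt (n, k) * f (pt (n, k)))
          = momF (batch n) f := by
        rw [momF, list_map_sum_range _ _ ((0 : Pt d), (0:ℝ))]
      rwa [h2] at h1
    rw [hdiff]
    exact HasSum.prod_fiberwise hFsum.hasSum hfib
end UMP

namespace UMP
open MeasureTheory
variable {d : ℕ} {K : Set (Pt d)}

/-- The full solution of the moment problem, given Zariski density and
finite-dimensionality of the filtration spaces. -/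
lemma solve_moment_problem (hKcl : IsClosed K)
    (hzar : ∀ P : MvPolynomial (Fin d) ℝ,
      (∀ x ∈ K, MvPolynomial.eval (fun i => x i) P = 0) → P = 0)
    (hfin : ∀ n, FiniteDimensional ℝ (NS K n)) (c : (Fin d → ℕ) → ℝ) :
    ∃ μ : MeasureTheory.SignedMeasure (Pt d),
      (∀ n : ℕ, Integrable (fun x => (1 + ‖x‖) ^ n) μ.totalVariation) ∧
      μ.totalVariation Kᶜ = 0 ∧
      ∀ α : Fin d → ℕ, sintegral μ (fun x => ∏ i, x i ^ α i) = c α := by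
  classical
  set L : MvPolynomial (Fin d) ℝ →ₗ[ℝ] ℝ :=
    (MvPolynomial.basisMonomials (Fin d) ℝ).constr ℝ (fun β : Fin d →₀ ℕ => c ⇑β) with hL
  obtain ⟨batch, hbK, hbmass, hbvan, hbtot⟩ := batches_exist hzar hfin L
  have hsumm : ∀ m : ℕ, Summable fun n => mass m (batch n) := by
    intro m
    rw [← summable_nat_add_iff (m+1)]
    refine Summable.of_nonneg_of_le (fun n => mass_nonneg _ _)
      (fun n => hbmass (n + (m+1)) m (by omega)) ?_
    have h1 := (summable_geometric_of_lt_one (by norm_num : (0:ℝ) ≤ 1/2)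
      (by norm_num : (1/2:ℝ) < 1)).mul_left ((1/2:ℝ)^(m+1))
    refine h1.congr fun n => ?_
    rw [← pow_add, add_comm]
  obtain ⟨μ, hμint, hμK, hμmom⟩ := assemble hKcl batch hbK hsumm
  refine ⟨μ, hμint, hμK, ?_⟩
  intro α
  set m := ∑ i, α i with hm
  set Pα : MvPolynomial (Fin d) ℝ := ∏ i, MvPolynomial.X i ^ α i with hPα
  have hfcont : Continuous (fun x : Pt d => ∏ i, x i ^ α i) := by fun_prop
  have hfb : ∀ x : Pt d, |∏ i, x i ^ α i| ≤ (1 + ‖x‖) ^ m := fun x => abs_mono_le' x α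
  have hhs := hμmom (fun x => ∏ i, x i ^ α i) m hfcont hfb
  have hmomeq : (fun n => momF (batch n) (fun x => ∏ i, x i ^ α i))
      = fun n => momP (batch n) Pα := by
    funext n
    rw [momP]
    congr 1
    funext x
    rw [hPα, eval_prod_pow]
  have hPmem : Pα ∈ NS K m := prod_pow_mem_NS α le_rfl
  have hfin2 : ∀ n ∉ Finset.range (m+1), momP (batch n) Pα = 0 := by
    intro n hn
    have hn' : m + 1 ≤ n := by simpa [Finset.mem_range, not_lt] using hn
    exact hbvan n m hn' Pα hPmem
  have hhs2 : HasSum (fun n => momP (batch n) Pα) (L Pα) := by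
    have h1 : HasSum (fun n => momP (batch n) Pα) _ := hasSum_sum_of_ne_finset_zero (s := Finset.range (m+1)) hfin2
    rwa [hbtot m Pα hPmem] at h1
  have hval : sintegral μ (fun x => ∏ i, x i ^ α i) = L Pα := by
    refine HasSum.unique ?_ hhs2
    rw [← hmomeq]
    exact hhs
  rw [hval]
  have hPmon : Pα = (MvPolynomial.monomial (Finsupp.equivFunOnFinite.symm α)) (1:ℝ) := by
    rw [MvPolynomial.monomial_eq, map_one, one_mul, Finsupp.prod_pow, hPα]
    exact Finset.prod_congr rfl fun i _ => by
      rw [Finsupp.coe_equivFunOnFinite_symm]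
  rw [hPmon, hL]
  rw [show (MvPolynomial.monomial (Finsupp.equivFunOnFinite.symm α)) (1:ℝ)
    = (MvPolynomial.basisMonomials (Fin d) ℝ) (Finsupp.equivFunOnFinite.symm α) by
      rw [MvPolynomial.coe_basisMonomials]]
  rw [Module.Basis.constr_basis]
  congr 1
end UMP


/-- Schmüdgen's theorem. The unrestricted `K`-moment problem is
solvable in `M_pol(ℝ^d)` iff `K` is Zariski dense and every `N_n(K)` is
finite-dimensional. -/
theorem unrestrictedMomentProblem_signedMeasure_iff
    (d : ℕ) (K : Set (EuclideanSpace ℝ (Fin d))) (hK : IsClosed K) :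
    (∀ c : (Fin d → ℕ) → ℝ, ∃ μ : MeasureTheory.SignedMeasure (EuclideanSpace ℝ (Fin d)),
        (∀ n : ℕ, MeasureTheory.Integrable (fun x => (1 + ‖x‖) ^ n) μ.totalVariation) ∧
        μ.totalVariation Kᶜ = 0 ∧
        ∀ α : Fin d → ℕ, sintegral μ (fun x => ∏ i, x i ^ α i) = c α)
    ↔
    ((∀ P : MvPolynomial (Fin d) ℝ,
        (∀ x ∈ K, MvPolynomial.eval (fun i => x i) P = 0) → P = 0) ∧
      ∀ n : ℕ, FiniteDimensional ℝ (polyGrowthSpace d K (fun _ => 1) n)) := by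
  classical
  constructor
  · rintro h
    constructor
    · -- Zariski density
      intro P hP
      by_contra hP0
      obtain ⟨α₀, hα₀⟩ := MvPolynomial.ne_zero_iff.1 hP0
      set c : (Fin d → ℕ) → ℝ := fun α => if α = ⇑α₀ then (P.coeff α₀)⁻¹ else 0 with hc
      obtain ⟨μ, hint, hsupp, hmom⟩ := h c
      have h1 := UnrestrictedMP.sintegral_poly μ hint c hmom P
      have h2 : ∑ β ∈ P.support, MvPolynomial.coeff β P * c ⇑β = 1 := by
        rw [Finset.sum_eq_single_of_mem α₀ (MvPolynomial.mem_support_iff.2 hα₀)]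
        · rw [hc]; simp [mul_inv_cancel₀ hα₀]
        · intro β _ hβ
          have : ⇑β ≠ ⇑α₀ := fun hh => hβ (DFunLike.coe_injective hh)
          rw [hc]; simp [this]
      have h3 := UnrestrictedMP.sintegral_zero_on_K (K := K) μ hsupp
        (fun x => MvPolynomial.eval (fun i => x i) P) hP
      rw [h3] at h1
      rw [h2] at h1
      exact one_ne_zero h1.symm
    · -- finite dimensionality
      intro n
      by_contra hfin
      set N := polyGrowthSpace d K (fun _ => 1) n with hN
      have hinf : Infinite (Module.Basis.ofVectorSpaceIndex ℝ N) := by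
        rw [← not_finite_iff_infinite]
        intro hfinite
        exact hfin (Module.Finite.of_basis (Module.Basis.ofVectorSpace ℝ N))
      set e := Infinite.natEmbedding (Module.Basis.ofVectorSpaceIndex ℝ N)
      set u : ℕ → N := fun k => (Module.Basis.ofVectorSpace ℝ N) (e k) with hu
      have hui : LinearIndependent ℝ u :=
        (Module.Basis.ofVectorSpace ℝ N).linearIndependent.comp e e.injective
      set v : ℕ → MvPolynomial (Fin d) ℝ := fun k => (u k : MvPolynomial (Fin d) ℝ) with hv
      have hvi : LinearIndependent ℝ v :=
        hui.map' N.subtype (Submodule.ker_subtype N)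
      -- growth constants
      have hmemN : ∀ k, ∃ C : ℝ, ∀ x ∈ K,
          |MvPolynomial.eval (fun i => x i) (v k) * 1| ≤ C * (1 + ‖x‖) ^ n :=
        fun k => (u k).2
      set C : ℕ → ℝ := fun k => max (Classical.choose (hmemN k)) 1 with hC
      have hCb : ∀ k, ∀ x ∈ K,
          |MvPolynomial.eval (fun i => x i) (v k)| ≤ C k * (1 + ‖x‖) ^ n := by
        intro k x hx
        have h := Classical.choose_spec (hmemN k) x hx
        rw [mul_one] at h
        exact h.trans (mul_le_mul_of_nonneg_right (le_max_left _ _) (by positivity))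
      have hC1 : ∀ k, (1 : ℝ) ≤ C k := fun k => le_max_right _ _
      -- a linear functional with prescribed unbounded values on the `v k`
      set φ : Submodule.span ℝ (Set.range v) →ₗ[ℝ] ℝ :=
        (Module.Basis.span hvi).constr ℝ (fun k => (k + 1 : ℝ) * C k) with hφ
      obtain ⟨L, hL⟩ := LinearMap.exists_extend φ
      have hLv : ∀ k, L (v k) = (k + 1 : ℝ) * C k := by
        intro k
        have h1 : ((Module.Basis.span hvi) k : MvPolynomial (Fin d) ℝ) = v k :=
          congrArg Subtype.val (Module.Basis.span_apply hvi k)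
        have h2 : L (v k)
            = (L ∘ₗ (Submodule.span ℝ (Set.range v)).subtype) ((Module.Basis.span hvi) k) := by
          rw [LinearMap.comp_apply, Submodule.subtype_apply, h1]
        rw [h2, hL, hφ, Module.Basis.constr_basis]
      -- the moment sequence
      set c : (Fin d → ℕ) → ℝ := fun α => L (∏ i, MvPolynomial.X i ^ α i) with hcdef
      have hLc : ∀ P : MvPolynomial (Fin d) ℝ,
          ∑ β ∈ P.support, MvPolynomial.coeff β P * c ⇑β = L P := by
        intro P
        have hmono : ∀ β : Fin d →₀ ℕ,
            (∏ i, MvPolynomial.X i ^ (β i : ℕ) : MvPolynomial (Fin d) ℝ)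
              = MvPolynomial.monomial β 1 := by
          intro β
          rw [MvPolynomial.monomial_eq, map_one, one_mul, Finsupp.prod_pow]
        calc ∑ β ∈ P.support, MvPolynomial.coeff β P * c ⇑β
            = ∑ β ∈ P.support, L (MvPolynomial.coeff β P • ∏ i, MvPolynomial.X i ^ β i) := by
              refine Finset.sum_congr rfl fun β _ => ?_
              rw [_root_.map_smul, smul_eq_mul, hcdef]
          _ = L (∑ β ∈ P.support, MvPolynomial.coeff β P • ∏ i, MvPolynomial.X i ^ β i) := by
              rw [map_sum]
          _ = L P := by
              congr 1
              calc ∑ β ∈ P.support, MvPolynomial.coeff β P • ∏ i, MvPolynomial.X i ^ β i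
                  = ∑ β ∈ P.support, MvPolynomial.monomial β (MvPolynomial.coeff β P) := by
                    refine Finset.sum_congr rfl fun β _ => ?_
                    rw [hmono β, MvPolynomial.smul_monomial, smul_eq_mul, mul_one]
                _ = P := MvPolynomial.support_sum_monomial_coeff P
      obtain ⟨μ, hint, hsupp, hmom⟩ := h c
      set m : ℝ := ∫ x, (1 + ‖x‖) ^ n ∂μ.totalVariation with hm
      have key : ∀ k : ℕ, (k + 1 : ℝ) ≤ m := by
        intro k
        have h1 : sintegral μ (fun x => MvPolynomial.eval (fun i => x i) (v k))
            = L (v k) := by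
          rw [UnrestrictedMP.sintegral_poly μ hint c hmom (v k), hLc (v k)]
        have h2 := UnrestrictedMP.sintegral_bound (K := K) μ hint hsupp n (v k) (C k)
          (le_trans zero_le_one (hC1 k)) (hCb k)
        rw [h1, hLv k] at h2
        have h3 : (k + 1 : ℝ) * C k ≤ C k * m := by
          refine le_trans ?_ h2
          rw [abs_of_nonneg]
          positivity
        have hCk : (0 : ℝ) < C k := lt_of_lt_of_le zero_lt_one (hC1 k)
        have h4 : C k * (k + 1 : ℝ) ≤ C k * m := by linarith [h3]
        exact (mul_le_mul_iff_right₀ hCk).1 h4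
      obtain ⟨k, hk⟩ := exists_nat_gt m
      have := key k
      have : (k : ℝ) < (k : ℝ) + 1 := by linarith
      linarith [key k]
  · rintro ⟨hzar, hfin⟩
    intro c
    exact UMP.solve_moment_problem hK hzar hfin c


end
end

section
/- Let k, m ∈ ℕ. There exists C > 0 such that for every polynomial P ∈ ℝ[x_1,…,x_d] of degree at most m, every x ∈ ℝ^d, and every 0 < r ≤ 1, one has |P(x)| ≤ (C/r^{k+d}) · sup { |∫_{ℝ^d} P(y) φ(y) dy| : φ ∈ C^∞(ℝ^d), supp φ ⊆ closed ball B̄(x,r), and max_{|α|≤k} sup_{y∈ℝ^d} |φ^{(α)}(y)| ≤ 1 }. -/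
open MeasureTheory

noncomputable section

namespace PolyTest

variable {d : ℕ}

lemma contDiff_pderivI {f : EuclideanSpace ℝ (Fin d) → ℝ} (hf : ContDiff ℝ (⊤ : ℕ∞) f)
    (i : Fin d) : ContDiff ℝ (⊤ : ℕ∞) (pderivI i f) := by
  have h1 : ContDiff ℝ (⊤ : ℕ∞) (fderiv ℝ f) := (contDiff_infty_iff_fderiv.mp hf).2
  exact (ContinuousLinearMap.apply ℝ ℝ (EuclideanSpace.single i 1)).contDiff.comp h1

lemma contDiff_pderivList {f : EuclideanSpace ℝ (Fin d) → ℝ} (hf : ContDiff ℝ (⊤ : ℕ∞) f) :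
    ∀ l : List (Fin d), ContDiff ℝ (⊤ : ℕ∞) (pderivList l f) := by
  intro l
  induction l generalizing f with
  | nil => exact hf
  | cons i t ih => exact ih (contDiff_pderivI hf i)

lemma pderivI_const_affine {f : EuclideanSpace ℝ (Fin d) → ℝ} (hf : ContDiff ℝ (⊤ : ℕ∞) f)
    (c a : ℝ) (x₀ : EuclideanSpace ℝ (Fin d)) (i : Fin d) :
    pderivI i (fun y => c * f (x₀ + a • y)) =
      fun y => (c * a) * pderivI i f (x₀ + a • y) := by
  funext y
  have hA : HasFDerivAt (fun y : EuclideanSpace ℝ (Fin d) => x₀ + a • y)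
      (a • ContinuousLinearMap.id ℝ (EuclideanSpace ℝ (Fin d))) y := by
    simpa using ((hasFDerivAt_id y).const_smul a).const_add x₀
  have hf' : HasFDerivAt f (fderiv ℝ f (x₀ + a • y)) (x₀ + a • y) :=
    (hf.differentiable (by simp) _).hasFDerivAt
  have h2 : HasFDerivAt (fun y : EuclideanSpace ℝ (Fin d) => c * f (x₀ + a • y))
      (c • ((fderiv ℝ f (x₀ + a • y)).comp
        (a • ContinuousLinearMap.id ℝ (EuclideanSpace ℝ (Fin d))))) y :=
    (hf'.comp y hA).const_mul c
  show fderiv ℝ (fun y => c * f (x₀ + a • y)) y (EuclideanSpace.single i 1) = _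
  rw [h2.fderiv]
  simp [pderivI, mul_comm, mul_assoc, mul_left_comm]

lemma pderivList_const_affine : ∀ (l : List (Fin d)) (f : EuclideanSpace ℝ (Fin d) → ℝ),
    ContDiff ℝ (⊤ : ℕ∞) f → ∀ (c a : ℝ) (x₀ : EuclideanSpace ℝ (Fin d)),
    pderivList l (fun y => c * f (x₀ + a • y)) =
      fun y => c * a ^ l.length * pderivList l f (x₀ + a • y)
  | [], f, hf, c, a, x₀ => by funext y; simp [pderivList]
  | i :: t, f, hf, c, a, x₀ => by
    show pderivList t (pderivI i fun y => c * f (x₀ + a • y)) = _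
    rw [pderivI_const_affine hf c a x₀ i,
      pderivList_const_affine t (pderivI i f) (contDiff_pderivI hf i) (c * a) a x₀]
    funext y
    show c * a * a ^ t.length * pderivList t (pderivI i f) (x₀ + a • y)
      = c * a ^ (t.length + 1) * pderivList t (pderivI i f) (x₀ + a • y)
    ring

lemma pderivList_zero : ∀ l : List (Fin d),
    pderivList l (fun _ : EuclideanSpace ℝ (Fin d) => (0 : ℝ)) = fun _ => 0
  | [] => rfl
  | i :: t => by
    show pderivList t (pderivI i fun _ => (0 : ℝ)) = _
    have h : pderivI i (fun _ : EuclideanSpace ℝ (Fin d) => (0 : ℝ)) = fun _ => 0 := by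
      funext y; simp [pderivI]
    rw [h, pderivList_zero t]

lemma length_multiList (α : Fin d → ℕ) :
    ((List.finRange d).flatMap fun i => List.replicate (α i) i).length = ∑ i, α i := by
  rw [List.length_flatMap, Fin.sum_univ_def]
  congr 1
  simp [Function.comp]

lemma pderivMulti_zero_eq (φ : EuclideanSpace ℝ (Fin d) → ℝ) :
    pderivMulti (fun _ => 0) φ = φ := by
  unfold pderivMulti
  have : ((List.finRange d).flatMap fun i => List.replicate 0 i) = [] := by simp
  rw [this]
  rfl

lemma pderivMulti_const_affine {f : EuclideanSpace ℝ (Fin d) → ℝ}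
    (hf : ContDiff ℝ (⊤ : ℕ∞) f) (c a : ℝ) (x₀ : EuclideanSpace ℝ (Fin d)) (α : Fin d → ℕ) :
    pderivMulti α (fun y => c * f (x₀ + a • y)) =
      fun y => c * a ^ (∑ i, α i) * pderivMulti α f (x₀ + a • y) := by
  unfold pderivMulti
  rw [pderivList_const_affine _ f hf c a x₀, length_multiList]

lemma tsupport_pderivI_subset (i : Fin d) (f : EuclideanSpace ℝ (Fin d) → ℝ) :
    tsupport (pderivI i f) ⊆ tsupport f := by
  refine closure_minimal ?_ (isClosed_tsupport f)
  intro x hx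
  apply support_fderiv_subset ℝ (f := f)
  simp only [Function.mem_support] at hx ⊢
  intro hc
  exact hx (by simp [pderivI, hc])

lemma hasCompactSupport_pderivList {f : EuclideanSpace ℝ (Fin d) → ℝ}
    (hs : HasCompactSupport f) : ∀ l : List (Fin d), HasCompactSupport (pderivList l f) := by
  intro l
  induction l generalizing f with
  | nil => exact hs
  | cons i t ih =>
    exact ih (hs.of_isClosed_subset (isClosed_tsupport _) (tsupport_pderivI_subset i f))



-- chunk2X
lemma pderivMulti_zero_fn {d : ℕ} (α : Fin d → ℕ) :
    pderivMulti α (fun _ : EuclideanSpace ℝ (Fin d) => (0:ℝ)) = fun _ => 0 := by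
  unfold pderivMulti; exact pderivList_zero _


variable {k : ℕ}

lemma continuous_evalE (P : MvPolynomial (Fin d) ℝ) :
    Continuous fun y : EuclideanSpace ℝ (Fin d) => MvPolynomial.eval (fun i => y i) P := by
  simp only [MvPolynomial.eval_eq]
  refine continuous_finset_sum _ fun s _ => Continuous.mul continuous_const ?_
  refine continuous_finset_prod _ fun i _ => Continuous.pow ?_ _
  exact (EuclideanSpace.proj i).continuous

lemma abs_coord_le_norm (y : EuclideanSpace ℝ (Fin d)) (i : Fin d) : |y i| ≤ ‖y‖ := by
  rw [EuclideanSpace.norm_eq, ← Real.sqrt_sq_eq_abs]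
  apply Real.sqrt_le_sqrt
  have := Finset.single_le_sum (f := fun j => ‖y j‖ ^ 2)
    (fun j _ => sq_nonneg _) (Finset.mem_univ i)
  simpa [Real.norm_eq_abs, sq_abs] using this

def testSet (d k : ℕ) (P : MvPolynomial (Fin d) ℝ) (x : EuclideanSpace ℝ (Fin d)) (r : ℝ) :
    Set ℝ :=
  {s : ℝ | ∃ φ : EuclideanSpace ℝ (Fin d) → ℝ, ContDiff ℝ (⊤ : ℕ∞) φ ∧
    tsupport φ ⊆ Metric.closedBall x r ∧
    (∀ α : Fin d → ℕ, (∑ i, α i) ≤ k → ∀ y, |pderivMulti α φ y| ≤ 1) ∧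
    s = |∫ y, MvPolynomial.eval (fun i => y i) P * φ y|}

lemma zero_mem_testSet (P : MvPolynomial (Fin d) ℝ) (x : EuclideanSpace ℝ (Fin d)) (r : ℝ) :
    (0 : ℝ) ∈ testSet d k P x r := by
  refine ⟨fun _ => 0, contDiff_const, ?_, ?_, by simp⟩
  · have : tsupport (fun _ : EuclideanSpace ℝ (Fin d) => (0:ℝ)) = ∅ := by
      simp [tsupport, Function.support]
    simp [this]
  · intro α _ y
    rw [pderivMulti_zero_fn α]
    norm_num

lemma testSet_nonempty (P : MvPolynomial (Fin d) ℝ) (x : EuclideanSpace ℝ (Fin d)) (r : ℝ) :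
    (testSet d k P x r).Nonempty := ⟨0, zero_mem_testSet P x r⟩

lemma integral_abs_le_of_testfun {P : MvPolynomial (Fin d) ℝ} {x : EuclideanSpace ℝ (Fin d)}
    {r B : ℝ} {φ : EuclideanSpace ℝ (Fin d) → ℝ}
    (hφc : Continuous φ)
    (hsupp : tsupport φ ⊆ Metric.closedBall x r)
    (hφ1 : ∀ y, |φ y| ≤ 1)
    (hB : ∀ y ∈ Metric.closedBall x r, |MvPolynomial.eval (fun i => y i) P| ≤ B) :
    |∫ y, MvPolynomial.eval (fun i => y i) P * φ y| ≤
      B * (volume (Metric.closedBall x r)).toReal := by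
  have hzero : ∀ y, y ∉ Metric.closedBall x r →
      MvPolynomial.eval (fun i => y i) P * φ y = 0 := by
    intro y hy
    have : φ y = 0 := image_eq_zero_of_notMem_tsupport (fun h => hy (hsupp h))
    simp [this]
  have heq := setIntegral_eq_integral_of_forall_compl_eq_zero
    (f := fun y => MvPolynomial.eval (fun i => y i) P * φ y) (μ := volume) hzero
  rw [← heq, ← Real.norm_eq_abs]
  refine le_of_le_of_eq (norm_setIntegral_le_of_norm_le_const (measure_closedBall_lt_top) ?_) rfl
  intro y hy
  rw [Real.norm_eq_abs, abs_mul]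
  calc |MvPolynomial.eval (fun i => y i) P| * |φ y|
      ≤ B * 1 := mul_le_mul (hB y hy) (hφ1 y) (abs_nonneg _)
        ((abs_nonneg _).trans (hB y hy))
  _ = B := mul_one B

lemma exists_poly_bound (P : MvPolynomial (Fin d) ℝ) (x : EuclideanSpace ℝ (Fin d)) (r : ℝ) :
    ∃ B : ℝ, 0 ≤ B ∧ ∀ y ∈ Metric.closedBall x r, |MvPolynomial.eval (fun i => y i) P| ≤ B := by
  obtain ⟨B, hB⟩ := (isCompact_closedBall x r).exists_bound_of_continuousOn
    ((continuous_evalE P).continuousOn)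
  refine ⟨max B 0, le_max_right _ _, fun y hy => ?_⟩
  exact le_trans (by simpa using hB y hy) (le_max_left _ _)

lemma testSet_bddAbove (P : MvPolynomial (Fin d) ℝ) (x : EuclideanSpace ℝ (Fin d)) (r : ℝ) :
    BddAbove (testSet d k P x r) := by
  obtain ⟨B, _, hB⟩ := exists_poly_bound P x r
  refine ⟨B * (volume (Metric.closedBall x r)).toReal, ?_⟩
  rintro s ⟨φ, hφc, hsupp, hder, rfl⟩
  have hφ1 : ∀ y, |φ y| ≤ 1 := by
    intro y
    have := hder (fun _ => 0) (by simp) y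
    rwa [pderivMulti_zero_eq φ] at this
  exact integral_abs_le_of_testfun hφc.continuous hsupp hφ1 hB

lemma testSet_sSup_nonneg (P : MvPolynomial (Fin d) ℝ) (x : EuclideanSpace ℝ (Fin d)) (r : ℝ) :
    0 ≤ sSup (testSet d k P x r) :=
  le_csSup (testSet_bddAbove P x r) (zero_mem_testSet P x r)


lemma aeval_apply_eq_eval {n : ℕ} (f : Fin n → ℝ) (Q : MvPolynomial (Fin n) ℝ) :
    MvPolynomial.aeval f Q = MvPolynomial.eval f Q := by
  rw [← MvPolynomial.coe_aeval_eq_eval]; rfl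

lemma paeval_apply_eq_eval (t : ℝ) (p : Polynomial ℝ) :
    Polynomial.aeval t p = Polynomial.eval t p := by
  rw [← Polynomial.coe_aeval_eq_eval]

lemma eval_eq_zero_of_ball (Q : MvPolynomial (Fin d) ℝ)
    (h : ∀ y : EuclideanSpace ℝ (Fin d), ‖y‖ < 1 → MvPolynomial.eval (fun i => y i) Q = 0) :
    Q = 0 := by
  apply MvPolynomial.funext
  intro v
  rw [map_zero]
  set w : EuclideanSpace ℝ (Fin d) := (EuclideanSpace.equiv (Fin d) ℝ).symm v with hw
  have hwc : ∀ i, w i = v i := fun i => rfl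
  set p : Polynomial ℝ := MvPolynomial.aeval (fun i => Polynomial.C (v i) * Polynomial.X) Q
    with hp
  have hcomp : ∀ t : ℝ, Polynomial.aeval t p = MvPolynomial.aeval (fun i => v i * t) Q := by
    intro t
    rw [hp, MvPolynomial.comp_aeval_apply]
    have : (fun i => Polynomial.aeval t (Polynomial.C (v i) * Polynomial.X)) =
        fun i => v i * t := by
      funext i
      simp [paeval_apply_eq_eval]
    rw [this]
  have hpos : (0:ℝ) < (‖w‖ + 1)⁻¹ := by positivity
  have hp0 : p = 0 := by
    apply Polynomial.eq_zero_of_infinite_isRoot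
    apply Set.Infinite.mono (s := Set.Ioo (0:ℝ) (‖w‖ + 1)⁻¹)
    · intro t ht
      have hta : |t| < (‖w‖ + 1)⁻¹ := by
        rw [abs_of_pos ht.1]; exact ht.2
      have hn : ‖t • w‖ < 1 := by
        rw [norm_smul, Real.norm_eq_abs]
        have h1 : |t| * ‖w‖ ≤ |t| * (‖w‖ + 1) := by nlinarith [abs_nonneg t]
        have h2 : |t| * (‖w‖ + 1) < (‖w‖ + 1)⁻¹ * (‖w‖ + 1) := by
          have : (0:ℝ) < ‖w‖ + 1 := by positivity
          exact mul_lt_mul_of_pos_right hta this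
        have h3 : (‖w‖ + 1)⁻¹ * (‖w‖ + 1) = 1 := by
          field_simp
        linarith
      have he := h (t • w) hn
      have hco : (fun i => (t • w) i) = fun i => v i * t := by
        funext i
        show t * w i = v i * t
        rw [hwc i, mul_comm]
      rw [hco] at he
      show Polynomial.IsRoot p t
      rw [Polynomial.IsRoot, ← paeval_apply_eq_eval, hcomp t, aeval_apply_eq_eval, he]
    · exact Set.infinite_coe_iff.mp (Set.Ioo.infinite hpos)
  have := hcomp 1
  rw [hp0, map_zero] at this
  have h2 : (fun i => v i * 1) = v := by funext i; ring
  rw [h2, aeval_apply_eq_eval] at this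
  exact this.symm

lemma exists_eval_ne_zero_of_ne_zero {Q : MvPolynomial (Fin d) ℝ} (hQ : Q ≠ 0) :
    ∃ y : EuclideanSpace ℝ (Fin d), ‖y‖ < 1 ∧ MvPolynomial.eval (fun i => y i) Q ≠ 0 := by
  by_contra hc
  push_neg at hc
  exact hQ (eval_eq_zero_of_ball Q hc)

lemma exists_bound_pderivList (k : ℕ) :
    ∀ (f : EuclideanSpace ℝ (Fin d) → ℝ), ContDiff ℝ (⊤ : ℕ∞) f → HasCompactSupport f →
    ∃ M : ℝ, 0 < M ∧ ∀ l : List (Fin d), l.length ≤ k → ∀ y, |pderivList l f y| ≤ M := by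
  induction k with
  | zero =>
    intro f hf hs
    obtain ⟨C, hC⟩ := hf.continuous.bounded_above_of_compact_support hs
    refine ⟨max C 1, lt_of_lt_of_le one_pos (le_max_right _ _), ?_⟩
    intro l hl y
    have hl0 : l = [] := List.length_eq_zero_iff.mp (Nat.le_zero.mp hl)
    subst hl0
    exact le_trans (by simpa [Real.norm_eq_abs, pderivList] using hC y) (le_max_left _ _)
  | succ k ih =>
    intro f hf hs
    obtain ⟨C0, hC0pos, hC0⟩ := (ih f hf hs)
    have hps : ∀ i : Fin d, HasCompactSupport (pderivI i f) := fun i =>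
      hs.of_isClosed_subset (isClosed_tsupport _) (tsupport_pderivI_subset i f)
    choose M hMpos hM using fun i : Fin d => ih (pderivI i f) (contDiff_pderivI hf i) (hps i)
    have hsum0 : (0:ℝ) ≤ ∑ i, M i := Finset.sum_nonneg fun i _ => (hMpos i).le
    refine ⟨C0 + ∑ i, M i, by linarith, ?_⟩
    have hsum : (0:ℝ) ≤ ∑ i, M i := Finset.sum_nonneg fun i _ => (hMpos i).le
    intro l hl y
    match l with
    | [] =>
      calc |pderivList [] f y| ≤ C0 := hC0 [] (Nat.zero_le k) y
      _ ≤ C0 + ∑ i, M i := by linarith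
    | i :: t =>
      have ht : t.length ≤ k := by simpa using Nat.succ_le_succ_iff.mp (by simpa using hl)
      calc |pderivList (i :: t) f y| = |pderivList t (pderivI i f) y| := rfl
      _ ≤ M i := hM i t ht y
      _ ≤ ∑ j, M j := Finset.single_le_sum (fun j _ => (hMpos j).le) (Finset.mem_univ i)
      _ ≤ C0 + ∑ j, M j := by linarith

lemma testSet_neg (P : MvPolynomial (Fin d) ℝ) (x : EuclideanSpace ℝ (Fin d)) (r : ℝ) :
    testSet d k (-P) x r = testSet d k P x r := by
  have key : ∀ φ : EuclideanSpace ℝ (Fin d) → ℝ,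
      |∫ y, MvPolynomial.eval (fun i => y i) (-P) * φ y| =
      |∫ y, MvPolynomial.eval (fun i => y i) P * φ y| := by
    intro φ
    have : (fun y => MvPolynomial.eval (fun i => y i) (-P) * φ y) =
        fun y => -(MvPolynomial.eval (fun i => y i) P * φ y) := by
      funext y; simp
    rw [this, integral_neg, abs_neg]
  ext s
  constructor
  · rintro ⟨φ, h1, h2, h3, rfl⟩
    exact ⟨φ, h1, h2, h3, (key φ)⟩
  · rintro ⟨φ, h1, h2, h3, rfl⟩
    exact ⟨φ, h1, h2, h3, (key φ).symm⟩

set_option maxHeartbeats 1600000 in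
lemma exists_pos_mem_testSet_of_pos {Q : MvPolynomial (Fin d) ℝ}
    {y₀ : EuclideanSpace ℝ (Fin d)} (hy₀ : ‖y₀‖ < 1)
    (hev : 0 < MvPolynomial.eval (fun i => y₀ i) Q) :
    ∃ s ∈ testSet d k Q 0 1, 0 < s := by
  set g : EuclideanSpace ℝ (Fin d) → ℝ := fun y => MvPolynomial.eval (fun i => y i) Q with hg
  have hgc : Continuous g := continuous_evalE Q
  obtain ⟨δ, hδpos, hδ⟩ := Metric.continuousAt_iff.mp (hgc.continuousAt (x := y₀))
    (g y₀ / 2) (by positivity)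
  set ε := min (δ / 2) ((1 - ‖y₀‖) / 2) with hε
  have hεpos : 0 < ε := lt_min (by positivity) (by linarith)
  have hεδ : ε < δ := lt_of_le_of_lt (min_le_left _ _) (by linarith)
  have hε1 : ε + ‖y₀‖ ≤ 1 := by
    have := min_le_right (δ / 2) ((1 - ‖y₀‖) / 2)
    have h0 : (0:ℝ) ≤ ‖y₀‖ := norm_nonneg _
    simp only [← hε] at this
    linarith
  set b : ContDiffBump y₀ := ⟨ε / 2, ε, by positivity, by linarith⟩ with hb
  have hglow : ∀ y ∈ Metric.ball y₀ ε, g y₀ / 2 ≤ g y := by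
    intro y hy
    have hd : dist y y₀ < δ := lt_trans (Metric.mem_ball.mp hy) hεδ
    have := hδ hd
    rw [Real.dist_eq] at this
    have := abs_lt.mp this
    linarith [this.1]
  -- bound on derivatives of b
  obtain ⟨M, hMpos, hM⟩ := exists_bound_pderivList k (fun y => b y)
    (b.contDiff (n := (⊤ : ℕ∞))) b.hasCompactSupport
  set t := M⁻¹ with ht
  have htpos : 0 < t := inv_pos.mpr hMpos
  set ψ : EuclideanSpace ℝ (Fin d) → ℝ := fun y => t * b y with hψ
  have hψsm : ContDiff ℝ (⊤ : ℕ∞) ψ := contDiff_const.mul (b.contDiff (n := (⊤ : ℕ∞)))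
  have hsuppb : tsupport (fun y => b y) = Metric.closedBall y₀ ε := b.tsupport_eq
  have hsubball : Metric.closedBall y₀ ε ⊆ Metric.closedBall (0 : EuclideanSpace ℝ (Fin d)) 1 := by
    intro y hy
    rw [Metric.mem_closedBall] at hy ⊢
    have h3 : dist y 0 ≤ dist y y₀ + dist y₀ 0 := dist_triangle _ _ _
    have h4 : dist y₀ 0 = ‖y₀‖ := dist_zero_right _
    have h5 : dist y 0 = ‖y‖ := dist_zero_right _
    rw [h5]
    linarith
  have hsuppsub : Function.support ψ ⊆ Function.support (fun y => b y) := by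
    intro y hy
    rw [Function.mem_support] at hy ⊢
    intro hc
    exact hy (by rw [hψ]; simp [hc])
  have hψsupp : tsupport ψ ⊆ Metric.closedBall (0 : EuclideanSpace ℝ (Fin d)) 1 := by
    have h1 : tsupport ψ ⊆ tsupport (fun y => (b y : ℝ)) := closure_mono hsuppsub
    rw [hsuppb] at h1
    exact h1.trans hsubball
  have hψder : ∀ α : Fin d → ℕ, (∑ i, α i) ≤ k → ∀ y, |pderivMulti α ψ y| ≤ 1 := by
    intro α hα y
    have heq := pderivMulti_const_affine (f := fun z => (b z : ℝ))
      (b.contDiff (n := (⊤ : ℕ∞))) t 1 0 α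
    have hfe : ψ = fun y => t * (fun z => (b z : ℝ)) ((0 : EuclideanSpace ℝ (Fin d)) + (1:ℝ) • y) := by
      funext z; rw [hψ]; simp
    have h2 : pderivMulti α ψ y = t * 1 ^ (∑ i, α i) *
        pderivMulti α (fun z => (b z : ℝ)) ((0 : EuclideanSpace ℝ (Fin d)) + (1:ℝ) • y) := by
      rw [hfe]
      exact congrFun heq y
    have hy' : ((0 : EuclideanSpace ℝ (Fin d)) + (1:ℝ) • y) = y := by simp
    rw [hy'] at h2
    rw [h2]
    simp only [one_pow, mul_one]
    rw [abs_mul, abs_of_pos htpos]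
    have hlen := hM ((List.finRange d).flatMap fun i => List.replicate (α i) i)
      (by rw [length_multiList]; exact hα) y
    calc t * |pderivList _ (fun z => b z) y| ≤ t * M :=
      mul_le_mul_of_nonneg_left hlen htpos.le
    _ = 1 := inv_mul_cancel₀ (ne_of_gt hMpos)
  -- positivity of the integral
  have hbint : Integrable (fun y => b y) := b.integrable
  have hgbint : Integrable (fun y => g y * b y) :=
    (hgc.mul b.continuous).integrable_of_hasCompactSupport (b.hasCompactSupport.mul_left)
  have hmono : ∀ y, g y₀ / 2 * b y ≤ g y * b y := by
    intro y
    by_cases hby : b y = 0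
    · simp [hby]
    · have hy : y ∈ Metric.ball y₀ ε := by
        rw [← b.support_eq]
        exact Function.mem_support.mpr hby
      exact mul_le_mul_of_nonneg_right (hglow y hy) b.nonneg
  have hintpos : 0 < ∫ y, g y * b y := by
    have h1 : (0:ℝ) < g y₀ / 2 * ∫ y, b y := by
      have := b.integral_pos (μ := volume)
      positivity
    calc (0:ℝ) < g y₀ / 2 * ∫ y, b y := h1
    _ = ∫ y, g y₀ / 2 * b y := by rw [integral_const_mul]
    _ ≤ ∫ y, g y * b y := integral_mono (hbint.const_mul _) hgbint hmono
  have hint : ∫ y, g y * ψ y = t * ∫ y, g y * b y := by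
    rw [← integral_const_mul]
    congr 1
    funext y
    rw [hψ]
    ring
  refine ⟨|∫ y, MvPolynomial.eval (fun i => y i) Q * ψ y|, ⟨ψ, hψsm, hψsupp, hψder, rfl⟩, ?_⟩
  rw [abs_pos]
  show (∫ y, g y * ψ y) ≠ 0
  rw [hint]
  positivity

lemma exists_pos_mem_testSet {Q : MvPolynomial (Fin d) ℝ} (hQ : Q ≠ 0) :
    ∃ s ∈ testSet d k Q 0 1, 0 < s := by
  obtain ⟨y₀, hy₀, hev⟩ := exists_eval_ne_zero_of_ne_zero hQ
  rcases lt_or_gt_of_ne hev with hneg | hpos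
  · have hev' : 0 < MvPolynomial.eval (fun i => y₀ i) (-Q) := by
      rw [map_neg]; linarith
    obtain ⟨s, hs, hspos⟩ := exists_pos_mem_testSet_of_pos (k := k) hy₀ hev'
    exact ⟨s, (testSet_neg Q 0 1) ▸ hs, hspos⟩
  · exact exists_pos_mem_testSet_of_pos hy₀ hpos

lemma testfun_hcs {x : EuclideanSpace ℝ (Fin d)} {r : ℝ} {φ : EuclideanSpace ℝ (Fin d) → ℝ}
    (h2 : tsupport φ ⊆ Metric.closedBall x r) : HasCompactSupport φ :=
  (isCompact_closedBall x r).of_isClosed_subset (isClosed_tsupport φ) h2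

lemma integrable_eval_mul (P : MvPolynomial (Fin d) ℝ) {φ : EuclideanSpace ℝ (Fin d) → ℝ}
    (hφ : Continuous φ) (hcs : HasCompactSupport φ) :
    Integrable (fun y => MvPolynomial.eval (fun i => y i) P * φ y) :=
  ((continuous_evalE P).mul hφ).integrable_of_hasCompactSupport hcs.mul_left

lemma eval_smul' (a : ℝ) (P : MvPolynomial (Fin d) ℝ) (v : Fin d → ℝ) :
    MvPolynomial.eval v (a • P) = a * MvPolynomial.eval v P := by
  rw [MvPolynomial.smul_eq_C_mul, map_mul, MvPolynomial.eval_C]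

lemma sSup_testSet_smul_le (a : ℝ) (P : MvPolynomial (Fin d) ℝ)
    (x : EuclideanSpace ℝ (Fin d)) (r : ℝ) :
    sSup (testSet d k (a • P) x r) ≤ |a| * sSup (testSet d k P x r) := by
  refine csSup_le (testSet_nonempty _ _ _) ?_
  rintro s ⟨φ, h1, h2, h3, rfl⟩
  have hi : (fun y => MvPolynomial.eval (fun i => y i) (a • P) * φ y) =
      fun y => a * (MvPolynomial.eval (fun i => y i) P * φ y) := by
    funext y; rw [eval_smul']; ring
  rw [hi, integral_const_mul, abs_mul]
  exact mul_le_mul_of_nonneg_left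
    (le_csSup (testSet_bddAbove P x r) ⟨φ, h1, h2, h3, rfl⟩) (abs_nonneg a)

lemma sSup_testSet_smul {a : ℝ} (ha : a ≠ 0) (P : MvPolynomial (Fin d) ℝ)
    (x : EuclideanSpace ℝ (Fin d)) (r : ℝ) :
    sSup (testSet d k (a • P) x r) = |a| * sSup (testSet d k P x r) := by
  refine le_antisymm (sSup_testSet_smul_le a P x r) ?_
  have h1 : sSup (testSet d k P x r) ≤ |a⁻¹| * sSup (testSet d k (a • P) x r) := by
    have := sSup_testSet_smul_le (k := k) a⁻¹ (a • P) x r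
    rwa [smul_smul, inv_mul_cancel₀ ha, one_smul] at this
  have h2 : |a| * sSup (testSet d k P x r) ≤ |a| * (|a⁻¹| * sSup (testSet d k (a • P) x r)) :=
    mul_le_mul_of_nonneg_left h1 (abs_nonneg a)
  calc |a| * sSup (testSet d k P x r)
      ≤ |a| * |a⁻¹| * sSup (testSet d k (a • P) x r) := by rw [mul_assoc]; exact h2
  _ = sSup (testSet d k (a • P) x r) := by
      rw [← abs_mul, mul_inv_cancel₀ ha, abs_one, one_mul]

set_option synthInstance.maxHeartbeats 1000000 in
set_option maxHeartbeats 4000000 in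
lemma exists_comparison (d k m : ℕ) :
    ∃ C : ℝ, 0 < C ∧ ∀ Q : MvPolynomial (Fin d) ℝ, Q.totalDegree ≤ m →
      |MvPolynomial.eval (fun _ => (0:ℝ)) Q| ≤ C * sSup (testSet d k Q 0 1) := by
  classical
  set V := MvPolynomial.restrictTotalDegree (Fin d) ℝ m with hV
  haveI : Nontrivial V := by
    refine ⟨⟨⟨1, ?_⟩, 0, ?_⟩⟩
    · rw [MvPolynomial.mem_restrictTotalDegree, MvPolynomial.totalDegree_one]
      exact Nat.zero_le m
    · intro hc
      rw [Subtype.ext_iff] at hc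
      exact one_ne_zero (α := MvPolynomial (Fin d) ℝ) (by simpa using hc)
  set D := Module.finrank ℝ V with hD
  haveI : Nonempty (Fin D) := Fin.pos_iff_nonempty.mp (hD ▸ Module.finrank_pos)
  set e : V ≃ₗ[ℝ] (Fin D → ℝ) := (Module.finBasis ℝ V).equivFun with he
  set toP : (Fin D → ℝ) → MvPolynomial (Fin d) ℝ := fun w => ((e.symm w : V) : MvPolynomial (Fin d) ℝ) with htoP
  have htoPadd : ∀ w w', toP (w - w') = toP w - toP w' := by
    intro w w'; rw [htoP]; simp
  have htoPsmul : ∀ (a : ℝ) w, toP (a • w) = a • toP w := by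
    intro a w; rw [htoP]; simp
  -- uniform bound on evaluations over the unit ball
  obtain ⟨K, hKpos, hK⟩ : ∃ K : ℝ, 0 < K ∧ ∀ (w : Fin D → ℝ),
      ∀ y ∈ Metric.closedBall (0 : EuclideanSpace ℝ (Fin d)) 1,
      |MvPolynomial.eval (fun i => y i) (toP w)| ≤ K * ‖w‖ := by
    haveI : CompactSpace ↥(Metric.closedBall (0 : EuclideanSpace ℝ (Fin d)) 1) :=
      isCompact_iff_compactSpace.mp (isCompact_closedBall _ _)
    set Ψ : (Fin D → ℝ) →ₗ[ℝ] C(↥(Metric.closedBall (0 : EuclideanSpace ℝ (Fin d)) 1), ℝ) :=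
      { toFun := fun w => ⟨fun y => MvPolynomial.eval
          (fun i => (y : EuclideanSpace ℝ (Fin d)) i) (toP w),
          (continuous_evalE (toP w)).comp continuous_subtype_val⟩
        map_add' := by
          intro w w'
          ext y
          simp only [ContinuousMap.coe_mk, ContinuousMap.add_apply]
          rw [htoP]
          simp [map_add]
        map_smul' := by
          intro a w
          ext y
          simp only [ContinuousMap.coe_mk, ContinuousMap.smul_apply, RingHom.id_apply]
          rw [htoP]
          simp [eval_smul'] } with hΨ
    set L := LinearMap.toContinuousLinearMap Ψ with hL
    refine ⟨‖L‖ + 1, by positivity, ?_⟩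
    intro w y hy
    have h1 : |MvPolynomial.eval (fun i => y i) (toP w)| = ‖(L w) ⟨y, hy⟩‖ := by
      rw [Real.norm_eq_abs]; rfl
    rw [h1]
    calc ‖(L w) ⟨y, hy⟩‖ ≤ ‖L w‖ := ContinuousMap.norm_coe_le_norm (L w) ⟨y, hy⟩
    _ ≤ ‖L‖ * ‖w‖ := L.le_opNorm w
    _ ≤ (‖L‖ + 1) * ‖w‖ := by nlinarith [norm_nonneg w, norm_nonneg L]
  set F : (Fin D → ℝ) → ℝ := fun w => sSup (testSet d k (toP w) 0 1) with hF
  set G : (Fin D → ℝ) → ℝ := fun w => |MvPolynomial.eval (fun _ => (0:ℝ)) (toP w)| with hG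
  have hvol : (0:ℝ) ≤ (volume (Metric.closedBall (0 : EuclideanSpace ℝ (Fin d)) 1)).toReal :=
    ENNReal.toReal_nonneg
  set vol := (volume (Metric.closedBall (0 : EuclideanSpace ℝ (Fin d)) 1)).toReal with hvoldef
  -- Lipschitz-type bound for F
  have hFdiff : ∀ w w', F w ≤ F w' + K * vol * ‖w - w'‖ := by
    intro w w'
    refine csSup_le (testSet_nonempty _ _ _) ?_
    rintro s ⟨φ, h1, h2, h3, rfl⟩
    have hφ1 : ∀ y, |φ y| ≤ 1 := by
      intro y
      have := h3 (fun _ => 0) (by simp) y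
      rwa [pderivMulti_zero_eq φ] at this
    have hcs : HasCompactSupport φ := testfun_hcs h2
    have hsplit : (fun y => MvPolynomial.eval (fun i => y i) (toP w) * φ y) =
        (fun y => MvPolynomial.eval (fun i => y i) (toP w') * φ y) +
        (fun y => MvPolynomial.eval (fun i => y i) (toP w - toP w') * φ y) := by
      funext y
      simp only [Pi.add_apply, map_sub]
      ring
    have hint : ∫ y, MvPolynomial.eval (fun i => y i) (toP w) * φ y =
        (∫ y, MvPolynomial.eval (fun i => y i) (toP w') * φ y) +
        ∫ y, MvPolynomial.eval (fun i => y i) (toP w - toP w') * φ y := by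
      rw [hsplit]
      exact integral_add (integrable_eval_mul _ h1.continuous hcs)
        (integrable_eval_mul _ h1.continuous hcs)
    rw [hint]
    have hb2 : |∫ y, MvPolynomial.eval (fun i => y i) (toP w - toP w') * φ y| ≤
        (K * ‖w - w'‖) * vol := by
      rw [← htoPadd]
      exact integral_abs_le_of_testfun h1.continuous h2 hφ1 (hK (w - w'))
    calc |(∫ y, MvPolynomial.eval (fun i => y i) (toP w') * φ y) +
        ∫ y, MvPolynomial.eval (fun i => y i) (toP w - toP w') * φ y|
        ≤ |∫ y, MvPolynomial.eval (fun i => y i) (toP w') * φ y| +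
          |∫ y, MvPolynomial.eval (fun i => y i) (toP w - toP w') * φ y| := abs_add_le _ _
    _ ≤ F w' + (K * ‖w - w'‖) * vol := add_le_add
        (le_csSup (testSet_bddAbove _ _ _) ⟨φ, h1, h2, h3, rfl⟩) hb2
    _ = F w' + K * vol * ‖w - w'‖ := by ring
  have hFcont : Continuous F := by
    have hlip : LipschitzWith (Real.toNNReal (K * vol)) F := by
      refine LipschitzWith.of_dist_le_mul ?_
      intro w w'
      rw [Real.dist_eq, dist_eq_norm]
      have c1 := hFdiff w w'
      have c2 := hFdiff w' w
      rw [← norm_neg (w' - w), neg_sub] at c2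
      rw [abs_sub_le_iff]
      constructor
      · have : (Real.toNNReal (K * vol) : ℝ) = K * vol := Real.coe_toNNReal _ (by positivity)
        rw [this]; linarith
      · have : (Real.toNNReal (K * vol) : ℝ) = K * vol := Real.coe_toNNReal _ (by positivity)
        rw [this]; linarith
    exact hlip.continuous
  have hGcont : Continuous G := by
    have hlin : Continuous fun w : Fin D → ℝ =>
        MvPolynomial.eval (fun _ => (0:ℝ)) (toP w) := by
      have : IsLinearMap ℝ fun w : Fin D → ℝ =>
          MvPolynomial.eval (fun _ => (0:ℝ)) (toP w) := by
        constructor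
        · intro w w'; rw [htoP]; simp [map_add]
        · intro a w; rw [htoP]; simp [eval_smul']
      exact LinearMap.continuous_of_finiteDimensional this.mk'
    exact hlin.abs
  -- compactness on the sphere
  obtain ⟨w₀, hw₀mem, hw₀min⟩ := (isCompact_sphere (0 : Fin D → ℝ) 1).exists_isMinOn
    (NormedSpace.sphere_nonempty.mpr zero_le_one) hFcont.continuousOn
  obtain ⟨w₁, hw₁mem, hw₁max⟩ := (isCompact_sphere (0 : Fin D → ℝ) 1).exists_isMaxOn
    (NormedSpace.sphere_nonempty.mpr zero_le_one) hGcont.continuousOn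
  have hδpos : 0 < F w₀ := by
    have hw₀ne : w₀ ≠ 0 := by
      intro hc
      rw [hc] at hw₀mem
      simp at hw₀mem
    have hPne : toP w₀ ≠ 0 := by
      intro hc
      apply hw₀ne
      have : (e.symm w₀ : V) = 0 := by
        apply Subtype.ext
        simpa [htoP] using hc
      have := congrArg e this
      simpa using this
    obtain ⟨s, hs, hspos⟩ := exists_pos_mem_testSet (k := k) hPne
    exact lt_of_lt_of_le hspos (le_csSup (testSet_bddAbove _ _ _) hs)
  have hGmax0 : 0 ≤ G w₁ := abs_nonneg _
  refine ⟨(G w₁ + 1) / F w₀, by positivity, ?_⟩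
  intro Q hQdeg
  by_cases hQ0 : Q = 0
  · rw [hQ0]
    simp only [map_zero, abs_zero]
    have := testSet_sSup_nonneg (k := k) (0 : MvPolynomial (Fin d) ℝ)
      (0 : EuclideanSpace ℝ (Fin d)) 1
    positivity
  · set v : V := ⟨Q, (MvPolynomial.mem_restrictTotalDegree _ m Q).mpr hQdeg⟩ with hv
    set w : Fin D → ℝ := e v with hwdef
    have htoPw : toP w = Q := by
      rw [htoP, hwdef]
      simp [hv]
    have hwne : w ≠ 0 := by
      intro hc
      apply hQ0
      have : toP w = toP 0 := by rw [hc]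
      rw [htoPw, htoP] at this
      simpa using this
    set n := ‖w‖ with hn
    have hnpos : 0 < n := norm_pos_iff.mpr hwne
    set wh := n⁻¹ • w with hwh
    have hwhmem : wh ∈ Metric.sphere (0 : Fin D → ℝ) 1 := by
      simp only [Metric.mem_sphere, dist_zero_right, hwh, norm_smul, norm_inv, norm_norm]
      rw [← hn]
      field_simp
      rw [Real.norm_eq_abs, abs_of_pos hnpos, div_self hnpos.ne']
    have hQsmul : toP wh = n⁻¹ • Q := by
      rw [hwh, htoPsmul, htoPw]
    -- G side
    have hGside : |MvPolynomial.eval (fun _ => (0:ℝ)) Q| ≤ n * G w₁ := by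
      have h1 : G wh ≤ G w₁ := hw₁max hwhmem
      have h2 : G wh = n⁻¹ * |MvPolynomial.eval (fun _ => (0:ℝ)) Q| := by
        rw [hG]
        simp only
        rw [hQsmul, eval_smul', abs_mul, abs_of_pos (inv_pos.mpr hnpos)]
      rw [h2] at h1
      calc |MvPolynomial.eval (fun _ => (0:ℝ)) Q|
          = n * (n⁻¹ * |MvPolynomial.eval (fun _ => (0:ℝ)) Q|) := by
            field_simp
      _ ≤ n * G w₁ := mul_le_mul_of_nonneg_left h1 hnpos.le
    -- F side
    have hFside : n * F w₀ ≤ sSup (testSet d k Q 0 1) := by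
      have h1 : F w₀ ≤ F wh := hw₀min hwhmem
      have h2 : F wh = n⁻¹ * sSup (testSet d k Q 0 1) := by
        rw [hF]
        simp only
        rw [hQsmul, sSup_testSet_smul (inv_ne_zero (ne_of_gt hnpos)) Q 0 1,
          abs_of_pos (inv_pos.mpr hnpos)]
      rw [h2] at h1
      have := mul_le_mul_of_nonneg_left h1 hnpos.le
      calc n * F w₀ ≤ n * (n⁻¹ * sSup (testSet d k Q 0 1)) := this
      _ = sSup (testSet d k Q 0 1) := by field_simp
    calc |MvPolynomial.eval (fun _ => (0:ℝ)) Q| ≤ n * G w₁ := hGside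
    _ ≤ (G w₁ + 1) * n := by nlinarith
    _ = (G w₁ + 1) / F w₀ * (n * F w₀) := by field_simp
    _ ≤ (G w₁ + 1) / F w₀ * sSup (testSet d k Q 0 1) := by
        have hc : (0:ℝ) ≤ (G w₁ + 1) / F w₀ := by positivity
        exact mul_le_mul_of_nonneg_left hFside hc

def affP (x : EuclideanSpace ℝ (Fin d)) (r : ℝ) (P : MvPolynomial (Fin d) ℝ) :
    MvPolynomial (Fin d) ℝ :=
  MvPolynomial.aeval (fun i => MvPolynomial.C (x i) + MvPolynomial.C r * MvPolynomial.X i) P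

lemma eval_affP (x : EuclideanSpace ℝ (Fin d)) (r : ℝ) (P : MvPolynomial (Fin d) ℝ)
    (v : Fin d → ℝ) :
    MvPolynomial.eval v (affP x r P) = MvPolynomial.eval (fun i => x i + r * v i) P := by
  rw [affP, ← aeval_apply_eq_eval, MvPolynomial.comp_aeval_apply]
  have h : (fun i => MvPolynomial.aeval v
      (MvPolynomial.C (x i) + MvPolynomial.C r * MvPolynomial.X i)) =
      fun i => x i + r * v i := by
    funext i
    simp
  rw [h, aeval_apply_eq_eval]

lemma totalDegree_affP_le (x : EuclideanSpace ℝ (Fin d)) (r : ℝ)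
    (P : MvPolynomial (Fin d) ℝ) : (affP x r P).totalDegree ≤ P.totalDegree := by
  rw [affP]
  conv_lhs => rw [← MvPolynomial.support_sum_monomial_coeff P, map_sum]
  refine (MvPolynomial.totalDegree_finset_sum _ _).trans ?_
  refine Finset.sup_le ?_
  intro s hs
  rw [MvPolynomial.aeval_monomial]
  refine (MvPolynomial.totalDegree_mul _ _).trans ?_
  have h1 : (algebraMap ℝ (MvPolynomial (Fin d) ℝ) (MvPolynomial.coeff s P)).totalDegree = 0 := by
    rw [MvPolynomial.algebraMap_eq, MvPolynomial.totalDegree_C]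
  rw [h1, zero_add]
  have h2 : ∀ i : Fin d, (MvPolynomial.C (x i) +
      MvPolynomial.C r * MvPolynomial.X i).totalDegree ≤ 1 := by
    intro i
    refine (MvPolynomial.totalDegree_add _ _).trans ?_
    refine max_le (by rw [MvPolynomial.totalDegree_C]; norm_num) ?_
    refine (MvPolynomial.totalDegree_mul _ _).trans ?_
    rw [MvPolynomial.totalDegree_C, MvPolynomial.totalDegree_X]
  refine le_trans ?_ (MvPolynomial.le_totalDegree hs)
  have h3 : ∀ i ∈ s.support, ((MvPolynomial.C (x i) +
      MvPolynomial.C r * MvPolynomial.X i) ^ s i).totalDegree ≤ s i := by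
    intro i _
    refine (MvPolynomial.totalDegree_pow _ _).trans ?_
    calc s i * (MvPolynomial.C (x i) + MvPolynomial.C r * MvPolynomial.X i).totalDegree
        ≤ s i * 1 := Nat.mul_le_mul_left _ (h2 i)
    _ = s i := Nat.mul_one _
  rw [Finsupp.prod, Finsupp.sum]
  refine (MvPolynomial.totalDegree_finset_prod _ _).trans ?_
  exact Finset.sum_le_sum h3

lemma integral_affine (f : EuclideanSpace ℝ (Fin d) → ℝ) (x : EuclideanSpace ℝ (Fin d))
    {r : ℝ} (hr : 0 < r) :
    ∫ y, f y = r ^ d * ∫ z, f (x + r • z) := by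
  have h1 : ∫ z, f (x + z) = ∫ y, f y := integral_add_left_eq_self f x
  have h2 := MeasureTheory.Measure.integral_comp_smul (volume : Measure (EuclideanSpace ℝ (Fin d)))
    (fun z => f (x + z)) r
  rw [finrank_euclideanSpace_fin] at h2
  rw [h1] at h2
  have h3 : |(r ^ d)⁻¹| = (r ^ d)⁻¹ := abs_of_pos (by positivity)
  rw [h3, smul_eq_mul] at h2
  have hrd : (0:ℝ) < r ^ d := by positivity
  field_simp at h2 ⊢
  linarith [h2]

lemma scale_mem_testSet {P : MvPolynomial (Fin d) ℝ} {x : EuclideanSpace ℝ (Fin d)} {r : ℝ}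
    (hr : 0 < r) (hr1 : r ≤ 1) {s : ℝ}
    (hs : s ∈ testSet d k (affP x r P) 0 1) : r ^ (k + d) * s ∈ testSet d k P x r := by
  obtain ⟨ψ, hψ1, hψ2, hψ3, rfl⟩ := hs
  set x₀ : EuclideanSpace ℝ (Fin d) := (-(r⁻¹)) • x with hx₀
  set φ : EuclideanSpace ℝ (Fin d) → ℝ := fun y => r ^ k * ψ (x₀ + r⁻¹ • y) with hφ
  have haffpt : ∀ y : EuclideanSpace ℝ (Fin d), x₀ + r⁻¹ • y = r⁻¹ • (y - x) := by
    intro y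
    rw [smul_sub, hx₀, neg_smul]
    abel
  have hφsm : ContDiff ℝ (⊤ : ℕ∞) φ :=
    contDiff_const.mul (hψ1.comp (contDiff_const.add (contDiff_id.const_smul r⁻¹)))
  have hφsupp : tsupport φ ⊆ Metric.closedBall x r := by
    refine closure_minimal ?_ Metric.isClosed_closedBall
    intro y hy
    rw [Function.mem_support] at hy
    have hne : ψ (x₀ + r⁻¹ • y) ≠ 0 := by
      intro hc
      exact hy (by rw [hφ]; simp [hc])
    have hmem : x₀ + r⁻¹ • y ∈ Metric.closedBall (0 : EuclideanSpace ℝ (Fin d)) 1 :=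
      hψ2 (subset_closure (Function.mem_support.mpr hne))
    rw [haffpt y, Metric.mem_closedBall, dist_zero_right, norm_smul,
      Real.norm_eq_abs, abs_of_pos (inv_pos.mpr hr)] at hmem
    rw [Metric.mem_closedBall, dist_eq_norm]
    calc ‖y - x‖ = r * (r⁻¹ * ‖y - x‖) := by field_simp
    _ ≤ r * 1 := mul_le_mul_of_nonneg_left hmem hr.le
    _ = r := mul_one r
  have hφder : ∀ α : Fin d → ℕ, (∑ i, α i) ≤ k → ∀ y, |pderivMulti α φ y| ≤ 1 := by
    intro α hα y
    have heq := pderivMulti_const_affine hψ1 (r ^ k) r⁻¹ x₀ α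
    have h2 : pderivMulti α φ y = r ^ k * (r⁻¹) ^ (∑ i, α i) *
        pderivMulti α ψ (x₀ + r⁻¹ • y) := congrFun heq y
    rw [h2, abs_mul]
    have hcpos : (0:ℝ) < r ^ k * (r⁻¹) ^ (∑ i, α i) := by positivity
    rw [abs_of_pos hcpos]
    have hble := hψ3 α hα (x₀ + r⁻¹ • y)
    have hcle : r ^ k * (r⁻¹) ^ (∑ i, α i) ≤ 1 := by
      set j := ∑ i, α i
      have hj : j ≤ k := hα
      have hsplit : r ^ k = r ^ (k - j) * r ^ j := by
        rw [← pow_add, Nat.sub_add_cancel hj]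
      rw [hsplit, inv_pow, mul_assoc, mul_inv_cancel₀ (by positivity), mul_one]
      exact pow_le_one₀ hr.le hr1
    calc r ^ k * (r⁻¹) ^ (∑ i, α i) * |pderivMulti α ψ (x₀ + r⁻¹ • y)|
        ≤ r ^ k * (r⁻¹) ^ (∑ i, α i) * 1 := mul_le_mul_of_nonneg_left hble hcpos.le
    _ ≤ 1 := by rw [mul_one]; exact hcle
  refine ⟨φ, hφsm, hφsupp, hφder, ?_⟩
  have hci : ∀ z : EuclideanSpace ℝ (Fin d),
      MvPolynomial.eval (fun i => (x + r • z) i) P * φ (x + r • z) =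
      r ^ k * (MvPolynomial.eval (fun i => z i) (affP x r P) * ψ z) := by
    intro z
    have hc1 : x₀ + r⁻¹ • (x + r • z) = z := by
      rw [haffpt (x + r • z)]
      have : x + r • z - x = r • z := by abel
      rw [this, smul_smul, inv_mul_cancel₀ (ne_of_gt hr), one_smul]
    have hc2 : (fun i => (x + r • z) i) = fun i => x i + r * z i := by
      funext i
      simp [PiLp.add_apply, PiLp.smul_apply]
    rw [hφ]
    simp only []
    rw [hc1, eval_affP x r P (fun i => z i)]
    rw [hc2]
    ring
  have hint : ∫ y, MvPolynomial.eval (fun i => y i) P * φ y =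
      r ^ (k + d) * ∫ z, MvPolynomial.eval (fun i => z i) (affP x r P) * ψ z := by
    rw [integral_affine (fun y => MvPolynomial.eval (fun i => y i) P * φ y) x hr]
    have : (fun z => MvPolynomial.eval (fun i => (x + r • z) i) P * φ (x + r • z)) =
        fun z => r ^ k * (MvPolynomial.eval (fun i => z i) (affP x r P) * ψ z) := by
      funext z; exact hci z
    rw [this, integral_const_mul]
    rw [pow_add]
    ring
  rw [hint, abs_mul, abs_of_pos (show (0:ℝ) < r ^ (k+d) by positivity)]

end PolyTest

/-- A quantitative estimate for polynomials of bounded degree: `|P(x)|`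
is controlled, up to a factor `C / r^{k+d}`, by the supremum of `|∫ P φ|` over test
functions `φ` supported in `B̄(x,r)` with `‖φ‖_{k,0} ≤ 1`. -/
theorem polynomial_bound_by_testFunction_integrals
    (d k m : ℕ) :
    ∃ C : ℝ, 0 < C ∧ ∀ P : MvPolynomial (Fin d) ℝ, P.totalDegree ≤ m →
      ∀ (x : EuclideanSpace ℝ (Fin d)) (r : ℝ), 0 < r → r ≤ 1 →
      |MvPolynomial.eval (fun i => x i) P| ≤ (C / r ^ (k + d)) *
        sSup {s : ℝ | ∃ φ : EuclideanSpace ℝ (Fin d) → ℝ, ContDiff ℝ (⊤ : ℕ∞) φ ∧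
          tsupport φ ⊆ Metric.closedBall x r ∧
          (∀ α : Fin d → ℕ, (∑ i, α i) ≤ k → ∀ y, |pderivMulti α φ y| ≤ 1) ∧
          s = |∫ y, MvPolynomial.eval (fun i => y i) P * φ y|} := by
  obtain ⟨C, hCpos, hC⟩ := PolyTest.exists_comparison d k m
  refine ⟨C, hCpos, ?_⟩
  intro P hP x r hr hr1
  have hQdeg : (PolyTest.affP x r P).totalDegree ≤ m :=
    (PolyTest.totalDegree_affP_le x r P).trans hP
  have h1 := hC _ hQdeg
  have h2 : MvPolynomial.eval (fun _ => (0:ℝ)) (PolyTest.affP x r P) =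
      MvPolynomial.eval (fun i => x i) P := by
    rw [PolyTest.eval_affP]
    have hfe : (fun i : Fin d => x i + r * 0) = fun i => x i := by
      funext i; ring
    rw [hfe]
  rw [h2] at h1
  have hrpow : (0:ℝ) < r ^ (k + d) := by positivity
  have h3 : sSup (PolyTest.testSet d k (PolyTest.affP x r P) 0 1) ≤
      (r ^ (k + d))⁻¹ * sSup (PolyTest.testSet d k P x r) := by
    refine csSup_le (PolyTest.testSet_nonempty _ _ _) ?_
    intro s hs
    have hle := le_csSup (PolyTest.testSet_bddAbove P x r)
      (PolyTest.scale_mem_testSet hr hr1 hs)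
    calc s = (r ^ (k+d))⁻¹ * (r ^ (k+d) * s) := by field_simp
    _ ≤ (r ^ (k+d))⁻¹ * sSup (PolyTest.testSet d k P x r) :=
        mul_le_mul_of_nonneg_left hle (by positivity)
  have final := h1.trans (mul_le_mul_of_nonneg_left h3 hCpos.le)
  have hset : {s : ℝ | ∃ φ : EuclideanSpace ℝ (Fin d) → ℝ, ContDiff ℝ (⊤ : ℕ∞) φ ∧
      tsupport φ ⊆ Metric.closedBall x r ∧
      (∀ α : Fin d → ℕ, (∑ i, α i) ≤ k → ∀ y, |pderivMulti α φ y| ≤ 1) ∧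
      s = |∫ y, MvPolynomial.eval (fun i => y i) P * φ y|} = PolyTest.testSet d k P x r := rfl
  rw [hset, div_eq_mul_inv, mul_assoc]
  exact final


end
end

section
/- Let M = (M_p)_{p∈ℕ} be a weight sequence satisfying (M.3). For every a > 0 there exist C₀, C₁ > 0 such that ν_M(at)^{C₀} ≤ C₁ ν_M(t) for all t ≥ 0. -/
open MeasureTheory

noncomputable section

namespace NuMAux

variable (M : ℕ → ℝ)

def rM (q : ℕ) : ℝ := M q / M (q + 1)

def TT (p : ℕ) : ℝ := ∑' q : ℕ, rM M (p + q)

def rhoM (i : ℕ) : ℝ := (i + 1 : ℝ) * rM M i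

def LamM (q : ℕ) : ℝ := ∏ i ∈ Finset.range q, rhoM M i

variable {M}

theorem rM_pos (hpos : ∀ p, 0 < M p) (q : ℕ) : 0 < rM M q := div_pos (hpos q) (hpos (q + 1))

theorem rhoM_pos (hpos : ∀ p, 0 < M p) (i : ℕ) : 0 < rhoM M i :=
  mul_pos (by positivity) (rM_pos hpos i)

theorem LamM_pos (hpos : ∀ p, 0 < M p) (q : ℕ) : 0 < LamM M q :=
  Finset.prod_pos fun i _ => rhoM_pos hpos i

theorem rM_anti (hpos : ∀ p, 0 < M p)
    (hlc : ∀ p : ℕ, M (p + 1) ^ 2 ≤ M p * M (p + 2)) :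
    ∀ {p q : ℕ}, p ≤ q → rM M q ≤ rM M p := by
  have h : ∀ q, rM M (q + 1) ≤ rM M q := by
    intro q
    rw [rM, rM, div_le_div_iff₀ (hpos _) (hpos _)]
    have := hlc q
    nlinarith [hpos (q + 1), hpos q, hpos (q + 2)]
  intro p q hpq
  exact antitone_nat_of_succ_le h hpq

theorem summable_tail (hsum : Summable (fun p : ℕ => M p / M (p + 1))) (p : ℕ) :
    Summable (fun q => rM M (p + q)) := by
  have : Summable (fun q => rM M (q + p)) := (summable_nat_add_iff p).2 hsum
  exact this.congr fun n => by rw [add_comm]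

theorem TT_nonneg (hpos : ∀ p, 0 < M p) (p : ℕ) : 0 ≤ TT M p :=
  tsum_nonneg fun _ => (rM_pos hpos _).le

theorem TT_step (hsum : Summable (fun p : ℕ => M p / M (p + 1))) (p : ℕ) :
    TT M p = rM M p + TT M (p + 1) := by
  rw [TT, TT, Summable.tsum_eq_zero_add (summable_tail hsum p), add_zero]
  congr 1
  exact tsum_congr fun q => congrArg (rM M) (by omega)

theorem TT_split (hsum : Summable (fun p : ℕ => M p / M (p + 1))) (n p : ℕ) :
    TT M p = (∑ i ∈ Finset.range n, rM M (p + i)) + TT M (p + n) := by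
  induction n with
  | zero => simp
  | succ n ih =>
    rw [ih, TT_step hsum (p + n), Finset.sum_range_succ,
      show p + (n + 1) = p + n + 1 by omega]
    ring

theorem TT_double (hpos : ∀ p, 0 < M p)
    (hlc : ∀ p : ℕ, M (p + 1) ^ 2 ≤ M p * M (p + 2))
    (hsum : Summable (fun p : ℕ => M p / M (p + 1)))
    {C : ℝ} (hC : 0 < C)
    (hT : ∀ p : ℕ, 1 ≤ p → TT M p ≤ C * p * rM M p)
    {p : ℕ} (hp : 1 ≤ p) :
    TT M (2 * p) ≤ (2 * C / (2 * C + 1)) * TT M p := by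
  have h1 : TT M (2 * p) ≤ C * (2 * p) * rM M (2 * p) := by
    have := hT (2 * p) (by omega)
    push_cast at this ⊢
    linarith
  have hsplit := TT_split hsum p p
  have h2 : (p : ℝ) * rM M (2 * p) ≤ TT M p - TT M (p + p) := by
    have hs : ∀ i ∈ Finset.range p, rM M (2 * p) ≤ rM M (p + i) := fun i hi =>
      rM_anti hpos hlc (by simp at hi; omega)
    have := Finset.sum_le_sum hs
    rw [Finset.sum_const, Finset.card_range, nsmul_eq_mul] at this
    linarith [hsplit]
  have hpp : p + p = 2 * p := by omega
  rw [hpp] at h2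
  have h3 : TT M (2 * p) ≤ 2 * C * (TT M p - TT M (2 * p)) := by
    calc TT M (2 * p) ≤ C * (2 * p) * rM M (2 * p) := h1
    _ = 2 * C * ((p : ℝ) * rM M (2 * p)) := by ring
    _ ≤ 2 * C * (TT M p - TT M (2 * p)) := by
        apply mul_le_mul_of_nonneg_left h2 (by linarith)
  rw [div_mul_eq_mul_div, le_div_iff₀ (by linarith)]
  nlinarith

theorem TT_pow (hpos : ∀ p, 0 < M p)
    (hlc : ∀ p : ℕ, M (p + 1) ^ 2 ≤ M p * M (p + 2))
    (hsum : Summable (fun p : ℕ => M p / M (p + 1)))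
    {C : ℝ} (hC : 0 < C)
    (hT : ∀ p : ℕ, 1 ≤ p → TT M p ≤ C * p * rM M p)
    (j : ℕ) {p : ℕ} (hp : 1 ≤ p) :
    TT M (2 ^ j * p) ≤ (2 * C / (2 * C + 1)) ^ j * TT M p := by
  have hθ0 : (0:ℝ) ≤ 2 * C / (2 * C + 1) := by
    apply div_nonneg <;> linarith
  induction j with
  | zero => simp
  | succ j ih =>
    have hq : (1:ℕ) ≤ 2 ^ j * p := by
      have : 0 < 2 ^ j * p := by positivity
      omega
    have h1 : TT M (2 ^ (j + 1) * p) ≤ (2 * C / (2 * C + 1)) * TT M (2 ^ j * p) := by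
      have := TT_double hpos hlc hsum hC hT hq
      rw [show 2 * (2 ^ j * p) = 2 ^ (j + 1) * p by ring] at this
      exact this
    calc TT M (2 ^ (j + 1) * p) ≤ (2 * C / (2 * C + 1)) * TT M (2 ^ j * p) := h1
    _ ≤ (2 * C / (2 * C + 1)) * ((2 * C / (2 * C + 1)) ^ j * TT M p) :=
        mul_le_mul_of_nonneg_left ih hθ0
    _ = (2 * C / (2 * C + 1)) ^ (j + 1) * TT M p := by ring

theorem keyA (hpos : ∀ p, 0 < M p)
    (hlc : ∀ p : ℕ, M (p + 1) ^ 2 ≤ M p * M (p + 2))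
    (hsum : Summable (fun p : ℕ => M p / M (p + 1)))
    {C : ℝ} (hC : 0 < C)
    (hT : ∀ p : ℕ, 1 ≤ p → TT M p ≤ C * p * rM M p)
    {R : ℝ} (hR : 0 < R) :
    ∃ K : ℕ, 2 ≤ K ∧ ∀ i : ℕ, R * rhoM M (K * i + (K - 1)) ≤ rhoM M i := by
  set θ : ℝ := 2 * C / (2 * C + 1) with hθdef
  have hθ0 : 0 ≤ θ := by rw [hθdef]; apply div_nonneg <;> linarith
  have hθ1 : θ < 1 := by
    rw [hθdef, div_lt_one (by linarith)]; linarith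
  obtain ⟨j, hj⟩ := exists_pow_lt_of_lt_one (show (0:ℝ) < 1 / (2 * C * R) by positivity) hθ1
  have hj' : θ ^ j * (2 * C * R) < 1 := by
    rw [← lt_div_iff₀ (by positivity)]; exact hj
  have hK2 : (2:ℕ) ≤ 2 ^ (j + 1) := by
    calc (2:ℕ) = 2 ^ 1 := rfl
    _ ≤ 2 ^ (j + 1) := Nat.pow_le_pow_right (by norm_num) (by omega)
  refine ⟨2 ^ (j + 1), hK2, ?_⟩
  intro i
  set K : ℕ := 2 ^ (j + 1) with hKdef
  set p : ℕ := i + 1 with hpdef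
  have hsplit := TT_split hsum (2 ^ j * p) (2 ^ j * p)
  have hKp : K * p = 2 ^ j * p + 2 ^ j * p := by rw [hKdef]; ring
  have hterm : ∀ x ∈ Finset.range (2 ^ j * p), rM M (K * p - 1) ≤ rM M (2 ^ j * p + x) := by
    intro x hx
    simp only [Finset.mem_range] at hx
    exact rM_anti hpos hlc (by omega)
  have hsumlb : ((2 ^ j * p : ℕ) : ℝ) * rM M (K * p - 1) ≤
      TT M (2 ^ j * p) - TT M (2 ^ j * p + 2 ^ j * p) := by
    have := Finset.sum_le_sum hterm
    rw [Finset.sum_const, Finset.card_range, nsmul_eq_mul] at this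
    linarith [hsplit]
  have hub : TT M (2 ^ j * p) ≤ θ ^ j * (C * p * rM M i) := by
    have hCp : (0:ℝ) ≤ C * p := by positivity
    calc TT M (2 ^ j * p) ≤ θ ^ j * TT M p :=
          TT_pow hpos hlc hsum hC hT j (by omega)
    _ ≤ θ ^ j * (C * p * rM M p) :=
        mul_le_mul_of_nonneg_left (hT p (by omega)) (pow_nonneg hθ0 j)
    _ ≤ θ ^ j * (C * p * rM M i) := by
        apply mul_le_mul_of_nonneg_left _ (pow_nonneg hθ0 j)
        exact mul_le_mul_of_nonneg_left (rM_anti hpos hlc (by omega)) hCp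
  have hchain : ((2 ^ j * p : ℕ) : ℝ) * rM M (K * p - 1) ≤ θ ^ j * (C * p * rM M i) := by
    have := TT_nonneg hpos (2 ^ j * p + 2 ^ j * p)
    linarith
  have hKp2 : K * p = K * i + K := by rw [hpdef]; ring
  have hidx : K * i + (K - 1) = K * p - 1 := by omega
  rw [hidx]
  have h1 : 1 ≤ K * p := by
    have : 0 < K * p := by positivity
    omega
  have hcast : ((K * p - 1 : ℕ) : ℝ) + 1 = (K : ℝ) * p := by
    push_cast [Nat.cast_sub h1]
    ring
  rw [rhoM, rhoM, hcast]
  have hcast2 : ((i : ℝ) + 1) = (p : ℝ) := by rw [hpdef]; push_cast; ring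
  rw [hcast2]
  have hKcast : (K : ℝ) * p = 2 * ((2 ^ j * p : ℕ) : ℝ) := by
    rw [hKdef]; push_cast; ring
  rw [hKcast]
  calc R * (2 * ((2 ^ j * p : ℕ) : ℝ) * rM M (K * p - 1))
      = 2 * R * (((2 ^ j * p : ℕ) : ℝ) * rM M (K * p - 1)) := by ring
    _ ≤ 2 * R * (θ ^ j * (C * p * rM M i)) :=
        mul_le_mul_of_nonneg_left hchain (by positivity)
    _ = (θ ^ j * (2 * C * R)) * ((p : ℝ) * rM M i) := by ring
    _ ≤ 1 * ((p : ℝ) * rM M i) := by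
        apply mul_le_mul_of_nonneg_right hj'.le
        have := (rM_pos hpos i).le
        positivity
    _ = (p : ℝ) * rM M i := one_mul _

end NuMAux

end
namespace NuMAux
variable {M : ℕ → ℝ}

theorem LamM_succ (M : ℕ → ℝ) (n : ℕ) : LamM M (n + 1) = LamM M n * rhoM M n :=
  Finset.prod_range_succ _ _

theorem keyB (hpos : ∀ p, 0 < M p)
    (hlc : ∀ p : ℕ, M (p + 1) ^ 2 ≤ M p * M (p + 2))
    {R : ℝ} (hR : 0 < R) {K : ℕ} (hK2 : 2 ≤ K)
    (hA : ∀ i : ℕ, R * rhoM M (K * i + (K - 1)) ≤ rhoM M i)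
    (i m : ℕ) (h1 : K * i + (K - 1) ≤ m) (h2 : m + 1 ≤ K * i + 2 * K - 1) :
    R * rhoM M m ≤ 2 * rhoM M i := by
  set nn : ℕ := K * i + (K - 1) with hnn
  have hr : rM M m ≤ rM M nn := rM_anti hpos hlc h1
  have hAi := hA i
  have hm1 : ((m : ℝ) + 1) ≤ 2 * ((nn : ℝ) + 1) := by
    have : m + 1 ≤ 2 * (nn + 1) := by omega
    exact_mod_cast this
  have hrnn : 0 ≤ rM M nn := (rM_pos hpos _).le
  have hrm : 0 ≤ rM M m := (rM_pos hpos _).le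
  calc R * rhoM M m = R * ((m : ℝ) + 1) * rM M m := by rw [rhoM]; ring
    _ ≤ R * ((m : ℝ) + 1) * rM M nn := by
        apply mul_le_mul_of_nonneg_left hr (by positivity)
    _ ≤ R * (2 * ((nn : ℝ) + 1)) * rM M nn := by
        apply mul_le_mul_of_nonneg_right _ hrnn
        apply mul_le_mul_of_nonneg_left hm1 hR.le
    _ = 2 * (R * (((nn : ℝ) + 1) * rM M nn)) := by ring
    _ ≤ 2 * rhoM M i := by
        have : R * (((nn : ℝ) + 1) * rM M nn) ≤ rhoM M i := by
          rw [← hnn] at hAi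
          calc R * (((nn : ℝ) + 1) * rM M nn) = R * rhoM M nn := by rw [rhoM]
          _ ≤ rhoM M i := hAi
        linarith

section keyC
variable (hpos : ∀ p, 0 < M p)
    (hlc : ∀ p : ℕ, M (p + 1) ^ 2 ≤ M p * M (p + 2))
    {R : ℝ} (hR : 0 < R) {K : ℕ} (hK2 : 2 ≤ K)
    (hA : ∀ i : ℕ, R * rhoM M (K * i + (K - 1)) ≤ rhoM M i)

/-- The statement `S P1 rr` of the inductive product bound. -/
def SC (M : ℕ → ℝ) (R : ℝ) (K P1 rr : ℕ) : Prop :=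
  (R / 2) ^ (K * P1 + rr + 1) * LamM M (K * (P1 + 1) + rr) ≤
    LamM M (K - 1) * (LamM M P1) ^ K * (rhoM M P1) ^ (rr + 1)

include hpos hlc hR hK2 hA

theorem stepRR (P1 rr : ℕ) (h : rr + 2 ≤ K) (ih : SC M R K P1 rr) :
    SC M R K P1 (rr + 1) := by
  set q : ℕ := K * (P1 + 1) + rr with hq
  have he : K * (P1 + 1) = K * P1 + K := by ring
  have hB : R * rhoM M q ≤ 2 * rhoM M P1 :=
    keyB hpos hlc hR hK2 hA P1 q (by omega) (by omega)
  have h5 : (R / 2) * rhoM M q ≤ rhoM M P1 := by linarith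
  have hnn1 : (0:ℝ) ≤ (R / 2) * rhoM M q := by
    have := (rhoM_pos hpos q).le; positivity
  have hnn2 : (0:ℝ) ≤ LamM M (K - 1) * (LamM M P1) ^ K * (rhoM M P1) ^ (rr + 1) := by
    have h1 := (LamM_pos hpos (K - 1)).le
    have h2 := (LamM_pos hpos P1).le
    have h3 := (rhoM_pos hpos P1).le
    positivity
  calc (R / 2) ^ (K * P1 + (rr + 1) + 1) * LamM M (K * (P1 + 1) + (rr + 1))
      = ((R / 2) ^ (K * P1 + rr + 1) * LamM M (K * (P1 + 1) + rr)) *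
        ((R / 2) * rhoM M q) := by
        rw [show K * (P1 + 1) + (rr + 1) = (K * (P1 + 1) + rr) + 1 by omega, LamM_succ,
          show K * P1 + (rr + 1) + 1 = (K * P1 + rr + 1) + 1 by omega, pow_succ]
        ring
    _ ≤ (LamM M (K - 1) * (LamM M P1) ^ K * (rhoM M P1) ^ (rr + 1)) * rhoM M P1 := by
        apply mul_le_mul ih h5 hnn1 hnn2
    _ = LamM M (K - 1) * (LamM M P1) ^ K * (rhoM M P1) ^ (rr + 1 + 1) := by
        rw [pow_succ]; ring

theorem stepP1 (P1 : ℕ) (ih : SC M R K P1 (K - 1)) : SC M R K (P1 + 1) 0 := by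
  set q : ℕ := K * (P1 + 1) + (K - 1) with hq
  have he1 : K * (P1 + 1) = K * P1 + K := by ring
  have he2 : K * (P1 + 1 + 1) = K * P1 + 2 * K := by ring
  have hB : R * rhoM M q ≤ 2 * rhoM M (P1 + 1) :=
    keyB hpos hlc hR hK2 hA (P1 + 1) q (by omega) (by omega)
  have h5 : (R / 2) * rhoM M q ≤ rhoM M (P1 + 1) := by linarith
  have hnn1 : (0:ℝ) ≤ (R / 2) * rhoM M q := by
    have := (rhoM_pos hpos q).le; positivity
  have hih : (R / 2) ^ (K * P1 + (K - 1) + 1) * LamM M (K * (P1 + 1) + (K - 1)) ≤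
      LamM M (K - 1) * (LamM M (P1 + 1)) ^ K := by
    calc (R / 2) ^ (K * P1 + (K - 1) + 1) * LamM M (K * (P1 + 1) + (K - 1)) ≤
        LamM M (K - 1) * (LamM M P1) ^ K * (rhoM M P1) ^ ((K - 1) + 1) := ih
      _ = LamM M (K - 1) * (LamM M (P1 + 1)) ^ K := by
          rw [show (K - 1) + 1 = K by omega, LamM_succ, mul_pow]
          ring
  have hnn2 : (0:ℝ) ≤ LamM M (K - 1) * (LamM M (P1 + 1)) ^ K := by
    have h1 := (LamM_pos hpos (K - 1)).le
    have h2 := (LamM_pos hpos (P1 + 1)).le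
    positivity
  calc (R / 2) ^ (K * (P1 + 1) + 0 + 1) * LamM M (K * (P1 + 1 + 1) + 0)
      = ((R / 2) ^ (K * P1 + (K - 1) + 1) * LamM M (K * (P1 + 1) + (K - 1))) *
        ((R / 2) * rhoM M q) := by
        rw [show K * (P1 + 1 + 1) + 0 = (K * (P1 + 1) + (K - 1)) + 1 by omega, LamM_succ,
          show K * (P1 + 1) + 0 + 1 = (K * P1 + (K - 1) + 1) + 1 by omega, pow_succ]
        ring
    _ ≤ (LamM M (K - 1) * (LamM M (P1 + 1)) ^ K) * rhoM M (P1 + 1) := by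
        apply mul_le_mul hih h5 hnn1 hnn2
    _ = LamM M (K - 1) * (LamM M (P1 + 1)) ^ K * (rhoM M (P1 + 1)) ^ (0 + 1) := by
        rw [pow_one]
    _ = LamM M (K - 1) * (LamM M (P1 + 1)) ^ K * (rhoM M (P1 + 1)) ^ (0 + 1) := rfl

theorem baseC : SC M R K 0 0 := by
  rw [SC]
  have hA0 := hA 0
  rw [show K * 0 + (K - 1) = K - 1 by omega] at hA0
  have hL := (LamM_pos hpos (K - 1)).le
  have hr := (rhoM_pos hpos (K - 1)).le
  calc (R / 2) ^ (K * 0 + 0 + 1) * LamM M (K * (0 + 1) + 0)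
      = (R / 2) * (LamM M (K - 1) * rhoM M (K - 1)) := by
        rw [show K * 0 + 0 + 1 = 1 by omega, pow_one,
          show K * (0 + 1) + 0 = (K - 1) + 1 by omega, LamM_succ]
    _ ≤ LamM M (K - 1) * rhoM M 0 := by
        have h1 : (R / 2) * rhoM M (K - 1) ≤ rhoM M 0 := by
          calc (R / 2) * rhoM M (K - 1) ≤ R * rhoM M (K - 1) :=
              mul_le_mul_of_nonneg_right (by linarith) hr
            _ ≤ rhoM M 0 := hA0
        calc (R / 2) * (LamM M (K - 1) * rhoM M (K - 1))
            = LamM M (K - 1) * ((R / 2) * rhoM M (K - 1)) := by ring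
          _ ≤ LamM M (K - 1) * rhoM M 0 := mul_le_mul_of_nonneg_left h1 hL
    _ = LamM M (K - 1) * (LamM M 0) ^ K * (rhoM M 0) ^ (0 + 1) := by
        have h0 : LamM M 0 = 1 := Finset.prod_range_zero _
        rw [h0, one_pow, pow_one, mul_one]

theorem keyC : ∀ P1 rr : ℕ, rr + 1 ≤ K → SC M R K P1 rr := by
  intro P1
  induction P1 with
  | zero =>
    intro rr
    induction rr with
    | zero => intro _; exact baseC hpos hlc hR hK2 hA
    | succ n ihn => intro h; exact stepRR hpos hlc hR hK2 hA 0 n (by omega) (ihn (by omega))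
  | succ m ihm =>
    intro rr
    induction rr with
    | zero => intro _; exact stepP1 hpos hlc hR hK2 hA m (ihm (K - 1) (by omega))
    | succ n ihn => intro h; exact stepRR hpos hlc hR hK2 hA (m + 1) n (by omega) (ihn (by omega))

end keyC
end NuMAux
namespace NuMAux
variable {M : ℕ → ℝ}

noncomputable def lamM (M : ℕ → ℝ) (n : ℕ) : ℝ := M n / (Nat.factorial n : ℝ)

theorem lamM_pos (hpos : ∀ p, 0 < M p) (n : ℕ) : 0 < lamM M n :=
  div_pos (hpos n) (by exact_mod_cast Nat.factorial_pos n)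

theorem LamM_mul_lamM (hpos : ∀ p, 0 < M p) (hM0 : M 0 = 1) :
    ∀ n, LamM M n * lamM M n = 1 := by
  intro n
  induction n with
  | zero =>
    simp [LamM, lamM, hM0]
  | succ n ih =>
    have hfac : ((Nat.factorial (n+1) : ℕ) : ℝ) = (n + 1 : ℝ) * (Nat.factorial n : ℝ) := by
      rw [Nat.factorial_succ]; push_cast; ring
    have hkey : rhoM M n * lamM M (n + 1) = lamM M n := by
      rw [rhoM, rM, lamM, lamM, hfac]
      have h1 : M (n + 1) ≠ 0 := (hpos _).ne'
      have h2 : ((Nat.factorial n : ℕ) : ℝ) ≠ 0 := by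
        exact_mod_cast (Nat.factorial_pos n).ne'
      have h3 : (n + 1 : ℝ) ≠ 0 := by positivity
      field_simp
    rw [LamM_succ, mul_assoc, hkey, ih]

end NuMAux


open NuMAux in
/-- If the weight sequence `M` satisfies `(M.3)`, then for every `a > 0`
there are `C₀, C₁ > 0` with `ν_M(at)^{C₀} ≤ C₁ ν_M(t)` for all `t ≥ 0`. -/
theorem nuM_rpow_le_nuM_of_condM3
    (M : ℕ → ℝ) (hM : IsWeightSeq M) (hM3 : CondM3 M) (a : ℝ) (ha : 0 < a) :
    ∃ C₀ C₁ : ℝ, 0 < C₀ ∧ 0 < C₁ ∧ ∀ t : ℝ, 0 ≤ t →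
      nuM M (a * t) ^ C₀ ≤ C₁ * nuM M t := by
  obtain ⟨hpos, hM0, hM1, hlc, hsum⟩ := hM
  obtain ⟨C, hC, hM3'⟩ := hM3
  have hT : ∀ p : ℕ, 1 ≤ p → TT M p ≤ C * p * rM M p := fun p hp => hM3' p hp
  have hR : (0:ℝ) < 2 * max a 1 := by
    have : (1:ℝ) ≤ max a 1 := le_max_right a 1
    linarith
  obtain ⟨K, hK2, hA⟩ := keyA hpos hlc hsum hC hT hR
  set R : ℝ := 2 * max a 1 with hRdef
  have hRa : 2 * a ≤ R := by
    have : a ≤ max a 1 := le_max_left a 1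
    rw [hRdef]; linarith
  set A1 : ℝ := max (a * lamM M 1) 1 with hA1def
  have hA1pos : (0:ℝ) < A1 := lt_max_of_lt_right one_pos
  set C₁ : ℝ := max (LamM M (K-1) * A1 ^ (K-1)) ((max a 1) ^ K) with hC₁def
  have hmax1 : (0:ℝ) < max a 1 := lt_max_of_lt_right one_pos
  have hC₁ : 0 < C₁ := lt_max_of_lt_right (pow_pos hmax1 K)
  refine ⟨((2 * K - 1 : ℕ) : ℝ), C₁, by exact_mod_cast Nat.pos_of_ne_zero (by omega), hC₁, ?_⟩
  intro t ht
  rw [Real.rpow_natCast]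
  set x : ℝ := a * t with hxdef
  have hx : 0 ≤ x := by positivity
  have hterm_nonneg : ∀ (s : ℝ), 0 ≤ s → ∀ p : ℕ, 0 ≤ s ^ p * M p / (Nat.factorial p : ℝ) :=
    fun s hs p => div_nonneg (mul_nonneg (pow_nonneg hs p) (hpos p).le) (Nat.cast_nonneg _)
  have hnu_le : ∀ (s : ℝ), 0 ≤ s → ∀ n : ℕ, nuM M s ≤ s ^ n * lamM M n := by
    intro s hs n
    have h := ciInf_le (f := fun p : ℕ => s ^ p * M p / (Nat.factorial p : ℝ))
      ⟨0, by rintro y ⟨p, rfl⟩; exact hterm_nonneg s hs p⟩ n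
    rw [lamM, ← mul_div_assoc]
    exact h
  have hnu0 : ∀ (s : ℝ), 0 ≤ s → 0 ≤ nuM M s := fun s hs =>
    le_ciInf fun p => hterm_nonneg s hs p
  have hnu1 : nuM M x ≤ 1 := by
    have h := hnu_le x hx 0
    simpa [lamM, hM0] using h
  -- per-q bound
  have key : ∀ q : ℕ, nuM M x ^ (2 * K - 1) ≤ C₁ * (t ^ q * lamM M q) := by
    intro q
    have hlamq : 0 < lamM M q := lamM_pos hpos q
    by_cases hq : q < K
    · have h1 : nuM M x ^ (2 * K - 1) ≤ nuM M x := by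
        calc nuM M x ^ (2 * K - 1) ≤ nuM M x ^ 1 :=
            pow_le_pow_of_le_one (hnu0 x hx) hnu1 (by omega)
        _ = nuM M x := pow_one _
      have h3 : x ^ q * lamM M q = a ^ q * (t ^ q * lamM M q) := by
        rw [hxdef, mul_pow]; ring
      have h4 : a ^ q ≤ (max a 1) ^ K := by
        calc a ^ q ≤ (max a 1) ^ q := pow_le_pow_left₀ ha.le (le_max_left a 1) q
        _ ≤ (max a 1) ^ K := pow_le_pow_right₀ (le_max_right a 1) (by omega)
      have h5 : (0:ℝ) ≤ t ^ q * lamM M q := mul_nonneg (pow_nonneg ht q) hlamq.le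
      calc nuM M x ^ (2 * K - 1) ≤ x ^ q * lamM M q := h1.trans (hnu_le x hx q)
        _ = a ^ q * (t ^ q * lamM M q) := h3
        _ ≤ (max a 1) ^ K * (t ^ q * lamM M q) := mul_le_mul_of_nonneg_right h4 h5
        _ ≤ C₁ * (t ^ q * lamM M q) :=
            mul_le_mul_of_nonneg_right (le_max_right _ _) h5
    · push_neg at hq
      have hK0 : 0 < K := by omega
      have hDmod : K * (q / K) + q % K = q := Nat.div_add_mod q K
      have hmod : q % K < K := Nat.mod_lt _ hK0
      have hD1 : 1 ≤ q / K := (Nat.one_le_div_iff hK0).mpr hq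
      set P1 : ℕ := q / K - 1 with hP1
      set rr : ℕ := q % K with hrr
      have hqeq : q = K * (P1 + 1) + rr := by
        rw [show P1 + 1 = q / K by omega]
        omega
      have hrr1 : rr + 1 ≤ K := by omega
      have hSC := keyC hpos hlc hR hK2 hA P1 rr hrr1
      rw [SC, ← hqeq] at hSC
      set e : ℕ := K * P1 + rr + 1 with he
      set s1 : ℕ := K - (rr + 1) with hs1
      have hsK : s1 + (rr + 1) = K := by omega
      have hν := hnu0 x hx
      have hΛq := LamM_pos hpos q
      have hΛP1 := LamM_pos hpos P1
      have hρP1 := rhoM_pos hpos P1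
      have hΛK := LamM_pos hpos (K - 1)
      have hl1 : LamM M P1 * lamM M P1 = 1 := LamM_mul_lamM hpos hM0 P1
      have hl2 : LamM M (P1+1) * lamM M (P1+1) = 1 := LamM_mul_lamM hpos hM0 (P1+1)
      have hlq : LamM M q * lamM M q = 1 := LamM_mul_lamM hpos hM0 q
      -- Step 1 : ν^K * (Λ P1 ^ K * ρ P1 ^ (rr+1)) ≤ x ^ e
      have hstep1 : nuM M x ^ K * (LamM M P1 ^ K * rhoM M P1 ^ (rr + 1)) ≤ x ^ e := by
        have b1 : nuM M x ^ s1 ≤ (x ^ P1 * lamM M P1) ^ s1 :=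
          pow_le_pow_left₀ hν (hnu_le x hx P1) s1
        have b2 : nuM M x ^ (rr+1) ≤ (x ^ (P1+1) * lamM M (P1+1)) ^ (rr+1) :=
          pow_le_pow_left₀ hν (hnu_le x hx (P1+1)) (rr+1)
        have hy1 : (0:ℝ) ≤ (x ^ P1 * lamM M P1) ^ s1 := by
          have := (lamM_pos hpos P1).le; positivity
        have hcomb : nuM M x ^ K ≤ (x ^ P1 * lamM M P1) ^ s1 *
            (x ^ (P1+1) * lamM M (P1+1)) ^ (rr+1) := by
          calc nuM M x ^ K = nuM M x ^ s1 * nuM M x ^ (rr+1) := by rw [← pow_add, hsK]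
          _ ≤ _ := mul_le_mul b1 b2 (pow_nonneg hν _) hy1
        have hiden : (x ^ P1 * lamM M P1) ^ s1 * (x ^ (P1+1) * lamM M (P1+1)) ^ (rr+1) *
            (LamM M P1 ^ K * rhoM M P1 ^ (rr + 1)) = x ^ e := by
          have hexp : P1 * s1 + (P1 + 1) * (rr + 1) = e := by
            rw [he, ← hsK]; ring
          calc (x ^ P1 * lamM M P1) ^ s1 * (x ^ (P1+1) * lamM M (P1+1)) ^ (rr+1) *
              (LamM M P1 ^ K * rhoM M P1 ^ (rr + 1))
              = (x ^ (P1 * s1) * x ^ ((P1+1) * (rr+1))) *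
                ((lamM M P1 * LamM M P1) ^ s1 *
                 (lamM M (P1+1) * (LamM M P1 * rhoM M P1)) ^ (rr+1)) := by
                rw [← hsK, pow_add]
                rw [mul_pow, mul_pow, mul_pow, mul_pow, ← pow_mul, ← pow_mul]
                ring
            _ = x ^ e * ((LamM M P1 * lamM M P1) ^ s1 *
                 (LamM M (P1+1) * lamM M (P1+1)) ^ (rr+1)) := by
                rw [← pow_add, hexp, ← LamM_succ]
                ring_nf
            _ = x ^ e := by rw [hl1, hl2, one_pow, one_pow, mul_one, mul_one]
        calc nuM M x ^ K * (LamM M P1 ^ K * rhoM M P1 ^ (rr + 1))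
            ≤ (x ^ P1 * lamM M P1) ^ s1 * (x ^ (P1+1) * lamM M (P1+1)) ^ (rr+1) *
              (LamM M P1 ^ K * rhoM M P1 ^ (rr + 1)) := by
              apply mul_le_mul_of_nonneg_right hcomb
              have h1 := hΛP1.le
              have h2 := hρP1.le
              positivity
          _ = x ^ e := hiden
      -- Step 2 : ν^K * Λ q ≤ Λ(K-1) * t ^ e
      have hstep2 : nuM M x ^ K * LamM M q ≤ LamM M (K-1) * t ^ e := by
        have hmul : nuM M x ^ K * ((R/2) ^ e * LamM M q) ≤
            LamM M (K-1) * x ^ e := by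
          calc nuM M x ^ K * ((R/2) ^ e * LamM M q)
              ≤ nuM M x ^ K * (LamM M (K-1) * (LamM M P1 ^ K * rhoM M P1 ^ (rr+1))) := by
                apply mul_le_mul_of_nonneg_left _ (pow_nonneg hν K)
                calc (R/2) ^ e * LamM M q ≤ LamM M (K-1) * LamM M P1 ^ K * rhoM M P1 ^ (rr+1) := hSC
                _ = LamM M (K-1) * (LamM M P1 ^ K * rhoM M P1 ^ (rr+1)) := by ring
            _ = LamM M (K-1) * (nuM M x ^ K * (LamM M P1 ^ K * rhoM M P1 ^ (rr+1))) := by ring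
            _ ≤ LamM M (K-1) * x ^ e := mul_le_mul_of_nonneg_left hstep1 hΛK.le
        -- x^e = a^e t^e ≤ (R/2)^e t^e
        have hxe : x ^ e ≤ (R/2) ^ e * t ^ e := by
          rw [hxdef, mul_pow]
          apply mul_le_mul_of_nonneg_right _ (pow_nonneg ht e)
          apply pow_le_pow_left₀ ha.le (by linarith) e
        have hRe : (0:ℝ) < (R/2) ^ e := by positivity
        have : nuM M x ^ K * ((R/2) ^ e * LamM M q) ≤ LamM M (K-1) * ((R/2) ^ e * t ^ e) := by
          calc nuM M x ^ K * ((R/2) ^ e * LamM M q) ≤ LamM M (K-1) * x ^ e := hmul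
          _ ≤ LamM M (K-1) * ((R/2) ^ e * t ^ e) := mul_le_mul_of_nonneg_left hxe hΛK.le
        have h2 : (nuM M x ^ K * LamM M q) * (R/2) ^ e ≤
            (LamM M (K-1) * t ^ e) * (R/2) ^ e := by
          calc (nuM M x ^ K * LamM M q) * (R/2) ^ e
              = nuM M x ^ K * ((R/2) ^ e * LamM M q) := by ring
            _ ≤ LamM M (K-1) * ((R/2) ^ e * t ^ e) := this
            _ = (LamM M (K-1) * t ^ e) * (R/2) ^ e := by ring
        exact le_of_mul_le_mul_right h2 hRe
      -- Step 3 : multiply by ν^(K-1) ≤ (x lam1)^(K-1)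
      have hstep3 : nuM M x ^ (2*K-1) * LamM M q ≤ LamM M (K-1) * A1 ^ (K-1) * t ^ q := by
        have b3 : nuM M x ^ (K-1) ≤ (x * lamM M 1) ^ (K-1) := by
          apply pow_le_pow_left₀ hν
          have := hnu_le x hx 1
          rwa [pow_one] at this
        have hb3' : (x * lamM M 1) ^ (K-1) ≤ A1 ^ (K-1) * t ^ (K-1) := by
          have : x * lamM M 1 = (a * lamM M 1) * t := by rw [hxdef]; ring
          rw [this, mul_pow]
          apply mul_le_mul_of_nonneg_right _ (pow_nonneg ht _)
          apply pow_le_pow_left₀ _ (le_max_left _ _) _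
          have := (lamM_pos hpos 1).le
          positivity
        have hq' : e + (K - 1) = q := by
          have he1 : K * (P1 + 1) = K * P1 + K := by ring
          omega
        calc nuM M x ^ (2*K-1) * LamM M q
            = (nuM M x ^ K * LamM M q) * nuM M x ^ (K-1) := by
              rw [show 2*K-1 = K + (K-1) by omega, pow_add]; ring
          _ ≤ (LamM M (K-1) * t ^ e) * (x * lamM M 1) ^ (K-1) := by
              apply mul_le_mul hstep2 b3 (pow_nonneg hν _)
              have := hΛK.le
              have h2 : (0:ℝ) ≤ t ^ e := pow_nonneg ht e
              positivity
          _ ≤ (LamM M (K-1) * t ^ e) * (A1 ^ (K-1) * t ^ (K-1)) := by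
              apply mul_le_mul_of_nonneg_left hb3'
              have h2 : (0:ℝ) ≤ t ^ e := pow_nonneg ht e
              positivity
          _ = LamM M (K-1) * A1 ^ (K-1) * (t ^ e * t ^ (K-1)) := by ring
          _ = LamM M (K-1) * A1 ^ (K-1) * t ^ q := by rw [← pow_add, hq']
      -- conclude
      have hfin : nuM M x ^ (2*K-1) * LamM M q ≤ C₁ * t ^ q := by
        calc nuM M x ^ (2*K-1) * LamM M q ≤ LamM M (K-1) * A1 ^ (K-1) * t ^ q := hstep3
        _ ≤ C₁ * t ^ q := by
            apply mul_le_mul_of_nonneg_right (le_max_left _ _) (pow_nonneg ht q)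
      calc nuM M x ^ (2*K-1) = (nuM M x ^ (2*K-1) * LamM M q) * lamM M q := by
            rw [mul_assoc, hlq, mul_one]
        _ ≤ (C₁ * t ^ q) * lamM M q := mul_le_mul_of_nonneg_right hfin hlamq.le
        _ = C₁ * (t ^ q * lamM M q) := by ring
  -- take inf over q
  have hdiv : nuM M x ^ (2*K-1) / C₁ ≤ nuM M t := by
    apply le_ciInf
    intro q
    rw [div_le_iff₀ hC₁]
    calc nuM M x ^ (2*K-1) ≤ C₁ * (t ^ q * lamM M q) := key q
      _ = t ^ q * M q / (Nat.factorial q : ℝ) * C₁ := by rw [lamM]; ring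
  calc nuM M x ^ (2*K-1) = (nuM M x ^ (2*K-1) / C₁) * C₁ := by field_simp
    _ ≤ nuM M t * C₁ := mul_le_mul_of_nonneg_right hdiv hC₁.le
    _ = C₁ * nuM M t := by ring
end

section
/- Let M = (M_p)_{p∈ℕ} be a weight sequence satisfying (M.2). There exists C₀ > 0 such that for every a > 0 there exists C₁ > 0 with ν_M(t) ≤ C₁ t^a ν_M(C₀ t) for all t ≥ 0. -/
open MeasureTheory

noncomputable section

private lemma nuM_bdd_aux (M : ℕ → ℝ) (hpos : ∀ p, 0 < M p) {t : ℝ} (ht : 0 ≤ t) :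
    BddBelow (Set.range fun p : ℕ => t ^ p * M p / (Nat.factorial p : ℝ)) := by
  refine ⟨0, ?_⟩
  rintro x ⟨p, rfl⟩
  exact div_nonneg (mul_nonneg (pow_nonneg ht p) (hpos p).le) (by positivity)

private lemma nuM_le_aux (M : ℕ → ℝ) (hpos : ∀ p, 0 < M p) {t : ℝ} (ht : 0 ≤ t) (p : ℕ) :
    nuM M t ≤ t ^ p * M p / (Nat.factorial p : ℝ) :=
  ciInf_le (nuM_bdd_aux M hpos ht) p

private lemma nuM_nonneg_aux (M : ℕ → ℝ) (hpos : ∀ p, 0 < M p) {t : ℝ} (ht : 0 ≤ t) :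
    0 ≤ nuM M t :=
  le_ciInf fun p => div_nonneg (mul_nonneg (pow_nonneg ht p) (hpos p).le) (by positivity)

private lemma nuM_mono_aux (M : ℕ → ℝ) (hpos : ∀ p, 0 < M p) {s t : ℝ} (hs : 0 ≤ s)
    (hst : s ≤ t) : nuM M s ≤ nuM M t := by
  refine le_ciInf fun p => (nuM_le_aux M hpos hs p).trans ?_
  have : s ^ p ≤ t ^ p := pow_le_pow_left₀ hs hst p
  apply div_le_div_of_nonneg_right ?_ (by positivity)
  exact mul_le_mul_of_nonneg_right this (hpos p).le

/-- If the weight sequence `M` satisfies `(M.2)`, then there is `C₀ > 0`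
such that for every `a > 0` there is `C₁ > 0` with `ν_M(t) ≤ C₁ t^a ν_M(C₀ t)` for all
`t ≥ 0`. -/
theorem nuM_le_rpow_mul_nuM_of_condM2
    (M : ℕ → ℝ) (hM : IsWeightSeq M) (hM2 : CondM2 M) :
    ∃ C₀ : ℝ, 0 < C₀ ∧ ∀ a : ℝ, 0 < a → ∃ C₁ : ℝ, 0 < C₁ ∧ ∀ t : ℝ, 0 ≤ t →
      nuM M t ≤ C₁ * t ^ a * nuM M (C₀ * t) := by
  obtain ⟨C, hC, h2⟩ := hM2
  obtain ⟨hpos, hM0, hM1, -, -⟩ := hM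
  set C₀ : ℝ := max C 1 with hC₀def
  have hC₀1 : (1 : ℝ) ≤ C₀ := le_max_right _ _
  have hC₀ : (0 : ℝ) < C₀ := lt_of_lt_of_le one_pos hC₀1
  refine ⟨C₀, hC₀, fun a ha => ?_⟩
  set k : ℕ := ⌈a⌉₊ with hk
  have hak : a ≤ (k : ℝ) := Nat.le_ceil a
  have hCk : (0 : ℝ) < C₀ ^ k * M k := mul_pos (pow_pos hC₀ k) (hpos k)
  refine ⟨max 1 (C₀ ^ k * M k), lt_of_lt_of_le one_pos (le_max_left _ _), fun t ht => ?_⟩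
  rcases eq_or_lt_of_le ht with h0 | htpos
  · -- t = 0
    rw [← h0, Real.zero_rpow (ne_of_gt ha), mul_zero, zero_mul]
    have h1 := nuM_le_aux M hpos (le_refl (0 : ℝ)) 1
    simpa using h1
  · -- t > 0
    have hnn : 0 ≤ nuM M (C₀ * t) := nuM_nonneg_aux M hpos (by positivity)
    -- key pointwise estimate
    have key : ∀ p : ℕ, nuM M t ≤
        (C₀ ^ k * M k * t ^ k) * ((C₀ * t) ^ p * M p / (Nat.factorial p : ℝ)) := by
      intro p
      refine (nuM_le_aux M hpos ht (k + p)).trans ?_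
      have hrhs : (C₀ ^ k * M k * t ^ k) * ((C₀ * t) ^ p * M p / (Nat.factorial p : ℝ))
          = t ^ (k + p) * (C₀ ^ (k + p) * M k * M p) / (Nat.factorial p : ℝ) := by
        rw [mul_pow, pow_add, pow_add]; ring
      rw [hrhs]
      have hfact : (Nat.factorial p : ℝ) ≤ (Nat.factorial (k + p) : ℝ) := by
        exact_mod_cast Nat.factorial_le (Nat.le_add_left p k)
      have hnum : M (k + p) ≤ C₀ ^ (k + p) * M k * M p := by
        refine (h2 k p).trans ?_
        have : C ^ (k + p) ≤ C₀ ^ (k + p) := pow_le_pow_left₀ hC.le (le_max_left _ _) _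
        exact mul_le_mul_of_nonneg_right (mul_le_mul_of_nonneg_right this (hpos k).le)
          (hpos p).le
      gcongr <;> first
        | exact hnum
        | exact hfact
        | exact (hpos _).le
        | exact Nat.cast_pos.mpr (Nat.factorial_pos _)
        | exact mul_nonneg (pow_nonneg ht _)
            (mul_nonneg (mul_nonneg (pow_nonneg hC₀.le _) (hpos k).le) (hpos p).le)
        | positivity
    have hc : (0 : ℝ) < C₀ ^ k * M k * t ^ k := mul_pos hCk (pow_pos htpos k)
    have h3 : nuM M t / (C₀ ^ k * M k * t ^ k) ≤ nuM M (C₀ * t) := by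
      refine le_ciInf fun p => ?_
      rw [div_le_iff₀ hc, mul_comm]
      exact key p
    have h4 : nuM M t ≤ (C₀ ^ k * M k) * t ^ k * nuM M (C₀ * t) := by
      rw [div_le_iff₀ hc] at h3
      calc nuM M t ≤ nuM M (C₀ * t) * (C₀ ^ k * M k * t ^ k) := h3
        _ = (C₀ ^ k * M k) * t ^ k * nuM M (C₀ * t) := by ring
    rcases le_or_gt t 1 with ht1 | ht1
    · -- 0 < t ≤ 1 : t^k ≤ t^a
      refine h4.trans ?_
      have hpow : t ^ (k : ℕ) ≤ t ^ a := by
        rw [← Real.rpow_natCast t k]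
        exact Real.rpow_le_rpow_of_exponent_ge htpos ht1 hak
      have hpownn : (0 : ℝ) ≤ t ^ a := Real.rpow_nonneg ht a
      gcongr <;> first
        | exact le_max_right _ _
        | exact hpow
        | exact hCk.le
        | exact hpownn
        | positivity
    · -- t > 1
      have h5 : nuM M t ≤ nuM M (C₀ * t) := nuM_mono_aux M hpos ht (le_mul_of_one_le_left ht hC₀1)
      have h6 : (1 : ℝ) ≤ t ^ a := Real.one_le_rpow ht1.le ha.le
      calc nuM M t ≤ nuM M (C₀ * t) := h5
        _ = 1 * 1 * nuM M (C₀ * t) := by ring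
        _ ≤ max 1 (C₀ ^ k * M k) * t ^ a * nuM M (C₀ * t) := by
            gcongr
            exact le_max_left _ _

end
end
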